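/- arXiv:1009.1067 — 3 statements merged into one kernel-verified Lean document; each statement's English description precedes it below -/
import Mathlib

section
/- Let k ≥ 4 be even. For every integer j ≥ 0: (d^j/dz^j) E_k(z) = (−1)^j ((k+j−1)!/(k−1)!) · Q_k(z,j;0); and for every integer m ≥ 1: (d^j/dz^j) P_k(z;m) = Σ_{l=0}^j (−1)^{l+j} (2πim)^l (j!/l!) · C(k+j−1, k+l−1) · Q_{k+2l}(z, j−l; m). -/
noncomputable section

open Complex Filter MeasureTheory

abbrev SL2Z := Matrix.SpecialLinearGroup (Fin 2) ℤ
abbrev SL2R := Matrix.SpecialLinearGroup (Fin 2) ℝ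

/-- `j(γ,z) = cz+d` for `γ ∈ SL(2,ℤ)`. -/
def jZ (γ : SL2Z) (z : ℂ) : ℂ := ((γ 1 0 : ℤ) : ℂ) * z + ((γ 1 1 : ℤ) : ℂ)

/-- The Möbius action `γz = (az+b)/(cz+d)` for `γ ∈ SL(2,ℤ)`. -/
def actZ (γ : SL2Z) (z : ℂ) : ℂ := (((γ 0 0 : ℤ) : ℂ) * z + ((γ 0 1 : ℤ) : ℂ)) / jZ γ z

/-- `j(γ,z) = cz+d` for `γ ∈ SL(2,ℝ)`. -/
def jR (γ : SL2R) (z : ℂ) : ℂ := ((γ 1 0 : ℝ) : ℂ) * z + ((γ 1 1 : ℝ) : ℂ)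

/-- The Möbius action for `γ ∈ SL(2,ℝ)`. -/
def actR (γ : SL2R) (z : ℂ) : ℂ := (((γ 0 0 : ℝ) : ℂ) * z + ((γ 0 1 : ℝ) : ℂ)) / jR γ z

/-- Coprime pairs `(c,d)`, parametrizing the cosets `B\Γ` via the bottom row. -/
def CP : Type := {p : ℤ × ℤ // IsCoprime p.1 p.2}

/-- Coprime pairs with normalized sign, parametrizing `Γ∞\Γ` via the bottom row. -/
def CP1 : Type := {p : ℤ × ℤ // IsCoprime p.1 p.2 ∧ (0 < p.1 ∨ (p.1 = 0 ∧ 0 < p.2))}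

/-- `j(γ,z) = cz+d` in terms of the bottom row. -/
def jP (p : ℤ × ℤ) (z : ℂ) : ℂ := (p.1 : ℂ) * z + (p.2 : ℂ)

/-- `c_{γδ⁻¹} = c_γ d_δ − d_γ c_δ` in terms of the bottom rows of `γ, δ`. -/
def crossP (p q : ℤ × ℤ) : ℤ := p.1 * q.2 - p.2 * q.1

/-- `Im(γz) = Im z / |cz+d|²` in terms of the bottom row of `γ`. -/
def imP (p : ℤ × ℤ) (z : ℂ) : ℝ := z.im / Complex.normSq (jP p z)

/-- A representative Möbius action for a coset with bottom row the coprime pair `(c,d)`: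
choosing `a, b` with `ad−bc = 1`, return `(az+b)/(cz+d)`. -/
def mobiusP (p : ℤ × ℤ) (h : IsCoprime p.1 p.2) (z : ℂ) : ℂ :=
  ((h.choose_spec.choose : ℂ) * z - (h.choose : ℂ)) / jP p z

def mobiusCP (p : CP) (z : ℂ) : ℂ := mobiusP p.1 p.2 z
def mobiusCP1 (p : CP1) (z : ℂ) : ℂ := mobiusP p.1 p.2.1 z

/-- The term of the double Eisenstein series `E_{s,k-s}(z,w)`. -/
def dblEisTerm (k : ℤ) (s w : ℂ) (z : ℂ) (pq : CP × CP) : ℂ :=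
  if 0 < crossP pq.1.1 pq.2.1 then
    ((crossP pq.1.1 pq.2.1 : ℤ) : ℂ) ^ (w - 1) * (jP pq.1.1 z / jP pq.2.1 z) ^ (-s) *
      (jP pq.2.1 z) ^ (-k)
  else 0

/-- The double Eisenstein series `E_{s,k-s}(z,w)`. -/
def dblEis (k : ℤ) (s w : ℂ) (z : ℂ) : ℂ := ∑' pq : CP × CP, dblEisTerm k s w z pq

/-- The completing factor for `E*_{s,k-s}(z,w)`. -/
def eisFactor (k : ℤ) (s w : ℂ) : ℂ :=
  Complex.exp (s * Real.pi * I / 2) * Complex.Gamma s * Complex.Gamma ((k : ℂ) - s) *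
      Complex.Gamma ((k : ℂ) - w) * riemannZeta (1 - w + s) * riemannZeta (1 - w + (k : ℂ) - s) /
    ((2 : ℂ) ^ ((3 : ℂ) - w) * (Real.pi : ℂ) ^ ((k : ℂ) + 1 - w) * Complex.Gamma ((k : ℂ) - 1))

/-- The completed double Eisenstein series `E*_{s,k-s}(z,w)`. -/
def dblEisStar (k : ℤ) (s w : ℂ) (z : ℂ) : ℂ := eisFactor k s w * dblEis k s w z

/-- The weight-`k` Hecke operator `T_n`. -/
def hecke (k : ℤ) (n : ℕ) (f : ℂ → ℂ) (z : ℂ) : ℂ :=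
  (n : ℂ) ^ (k - 1) * ∑ p ∈ n.divisorsAntidiagonal,
    ((p.2 : ℕ) : ℂ) ^ (-k) * ∑ b ∈ Finset.range p.2, f (((p.1 : ℂ) * z + (b : ℂ)) / (p.2 : ℂ))

/-- The completed `L`-function `L*(f,s) = ∫_0^∞ f(iy) y^{s-1} dy`. -/
def Lstar (f : ℂ → ℂ) (s : ℂ) : ℂ := ∫ y in Set.Ioi (0 : ℝ), f ((y : ℂ) * I) * (y : ℂ) ^ (s - 1)

/-- The twisted completed `L`-function `L*(f,s;x) = ∫_0^∞ f(iy+x) y^{s-1} dy`. -/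
def LstarT (f : ℂ → ℂ) (s : ℂ) (x : ℚ) : ℂ :=
  ∫ y in Set.Ioi (0 : ℝ), f ((x : ℂ) + (y : ℂ) * I) * (y : ℂ) ^ (s - 1)

/-- The standard fundamental domain for `SL(2,ℤ)\ℍ`, as a subset of `ℝ²`. -/
def fundDom : Set (ℝ × ℝ) := {p | 0 < p.2 ∧ |p.1| ≤ 1 / 2 ∧ 1 ≤ p.1 ^ 2 + p.2 ^ 2}

/-- The Petersson inner product `⟨g,f⟩ = ∫_F g(z) conj(f(z)) y^k dx dy / y²`. -/
def petersson (k : ℤ) (g f : ℂ → ℂ) : ℂ :=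
  ∫ p in fundDom, g ((p.1 : ℂ) + (p.2 : ℂ) * I) * (starRingEnd ℂ) (f ((p.1 : ℂ) + (p.2 : ℂ) * I)) *
    ((p.2 : ℂ)) ^ (k - 2)

/-- `f` is a normalized Hecke eigenform of weight `k` for `SL(2,ℤ)`, with Fourier
coefficients `a`. -/
structure IsHeckeEigenform (k : ℤ) (f : ℂ → ℂ) (a : ℕ → ℂ) : Prop where
  holo : DifferentiableOn ℂ f {z : ℂ | 0 < z.im}
  transform : ∀ γ : SL2Z, ∀ z : ℂ, 0 < z.im → f (actZ γ z) = jZ γ z ^ k * f z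
  expansion : ∀ z : ℂ, 0 < z.im →
    HasSum (fun n : ℕ => a n * Complex.exp (2 * Real.pi * I * (n : ℂ) * z)) (f z)
  cusp : a 0 = 0
  normalized : a 1 = 1
  eigen : ∀ n : ℕ, 0 < n → ∃ lam : ℂ, ∀ z : ℂ, 0 < z.im → hecke k n f z = lam * f z

/-- The generalized Cohen kernel `C_k(z,s;x)`. -/
def cohen (k : ℤ) (s : ℂ) (x : ℚ) (z : ℂ) : ℂ :=
  (1 / 2) * ∑' γ : SL2Z, (actZ γ z + (x : ℂ)) ^ (-s) * (jZ γ z) ^ (-k)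

/-- The Poincaré series `P_k(z;m)` (over `Γ∞\Γ`). -/
def poincare (k : ℤ) (m : ℕ) (z : ℂ) : ℂ :=
  ∑' p : CP1, Complex.exp (2 * Real.pi * I * (m : ℂ) * mobiusCP1 p z) * (jP p.1 z) ^ (-k)

/-- The series `Q_k(z,l;m)`. -/
def Qser (k : ℤ) (l m : ℕ) (z : ℂ) : ℂ :=
  if l = 0 then poincare k m z
  else (1 / 2) * ∑' p : CP, Complex.exp (2 * Real.pi * I * (m : ℂ) * mobiusCP p z) *
    ((p.1.1 : ℂ)) ^ l * (jP p.1 z) ^ (-(k + (l : ℤ)))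

/-- The Rankin–Cohen bracket `[g₁,g₂]_n` of weights `k₁, k₂`. -/
def RC (k₁ k₂ n : ℕ) (g₁ g₂ : ℂ → ℂ) (z : ℂ) : ℂ :=
  ∑ r ∈ Finset.range (n + 1), (-1 : ℂ) ^ r * (Nat.choose (k₁ + n - 1) (n - r) : ℂ) *
    (Nat.choose (k₂ + n - 1) r : ℂ) * iteratedDeriv r g₁ z * iteratedDeriv (n - r) g₂ z

/-- The coefficient `A_{k₁,k₂}(l,u)_n`. -/
def Acoef (k₁ k₂ l u n : ℕ) : ℂ :=
  ((Nat.factorial (k₁ + n - 1) * Nat.factorial (k₂ + n - 1) : ℕ) : ℂ) /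
    ((Nat.factorial l * Nat.factorial u * Nat.factorial (n - l - u) *
      Nat.factorial (k₁ + l - 1) * Nat.factorial (k₂ + u - 1) : ℕ) : ℂ)

/-- The term of the double Poincaré series. -/
def dblPoinTerm (k₁ k₂ : ℤ) (w : ℂ) (m₁ m₂ : ℕ) (z : ℂ) (pq : CP × CP) : ℂ :=
  if 0 < crossP pq.1.1 pq.2.1 then
    ((crossP pq.1.1 pq.2.1 : ℤ) : ℂ) ^ (w - 1) *
      Complex.exp (2 * Real.pi * I * ((m₁ : ℂ) * mobiusCP pq.1 z + (m₂ : ℂ) * mobiusCP pq.2 z)) *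
      (jP pq.1.1 z) ^ (-k₁) * (jP pq.2.1 z) ^ (-k₂)
  else 0

/-- The double Poincaré series `P_{k₁,k₂}(z,w;m₁,m₂)`. -/
def dblPoin (k₁ k₂ : ℤ) (w : ℂ) (m₁ m₂ : ℕ) (z : ℂ) : ℂ :=
  ∑' pq : CP × CP, dblPoinTerm k₁ k₂ w m₁ m₂ z pq

/-- The double Eisenstein series `E_{k₁,k₂}(z,w)` with two integral weights. -/
def dblEis2 (k₁ k₂ : ℤ) (w : ℂ) (z : ℂ) : ℂ :=
  ∑' pq : CP × CP, if 0 < crossP pq.1.1 pq.2.1 then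
    ((crossP pq.1.1 pq.2.1 : ℤ) : ℂ) ^ (w - 1) * (jP pq.1.1 z) ^ (-k₁) * (jP pq.2.1 z) ^ (-k₂)
  else 0

/-- `f` transforms with weight `k` under `SL(2,ℤ)`. -/
def IsWeaklyModular (k : ℤ) (f : ℂ → ℂ) : Prop :=
  ∀ γ : SL2Z, ∀ z : ℂ, 0 < z.im → f (actZ γ z) = jZ γ z ^ k * f z

/-- `f` is a holomorphic modular form of weight `k` for `SL(2,ℤ)`. -/
def IsModularForm (k : ℤ) (f : ℂ → ℂ) : Prop :=
  DifferentiableOn ℂ f {z : ℂ | 0 < z.im} ∧ IsWeaklyModular k f ∧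
    ∃ C A : ℝ, ∀ z : ℂ, A ≤ z.im → ‖f z‖ ≤ C

/-- `f` is a holomorphic cusp form of weight `k` for `SL(2,ℤ)`. -/
def IsCuspForm (k : ℤ) (f : ℂ → ℂ) : Prop :=
  DifferentiableOn ℂ f {z : ℂ | 0 < z.im} ∧ IsWeaklyModular k f ∧
    Tendsto f (comap Complex.im atTop) (nhds 0)

/-- The term of the non-holomorphic kernel `K(z;s,s')`. -/
def KkerTerm (z s s' : ℂ) (γ : SL2Z) : ℂ :=
  (((actZ γ z).im : ℝ) : ℂ) ^ (s + s') / ((‖actZ γ z‖ : ℝ) : ℂ) ^ (2 * s)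

/-- The non-holomorphic kernel `K(z;s,s') = (1/2) Σ_{γ ∈ SL(2,ℤ)} Im(γz)^{s+s'}/|γz|^{2s}`. -/
def Kker (z s s' : ℂ) : ℂ := (1 / 2) * ∑' γ : SL2Z, KkerTerm z s s' γ

/-- The term of the non-holomorphic double Eisenstein series `ℰ(z,w;s,s')`. -/
def nhTerm (w s s' : ℂ) (z : ℂ) (pq : CP1 × CP1) : ℂ :=
  if crossP pq.1.1 pq.2.1 ≠ 0 then
    ((imP pq.1.1 z : ℝ) : ℂ) ^ s * ((imP pq.2.1 z : ℝ) : ℂ) ^ s' *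
      ((|crossP pq.1.1 pq.2.1| : ℤ) : ℂ) ^ (-w)
  else 0

/-- The non-holomorphic double Eisenstein series `ℰ(z,w;s,s')`. -/
def nhE (z : ℂ) (w s s' : ℂ) : ℂ := ∑' pq : CP1 × CP1, nhTerm w s s' z pq

/-- `g` is a cusp form of weight `k` with Fourier coefficients `b`. -/
structure IsCuspFormWithCoeffs (k : ℤ) (g : ℂ → ℂ) (b : ℕ → ℂ) : Prop where
  holo : DifferentiableOn ℂ g {z : ℂ | 0 < z.im}
  transform : ∀ γ : SL2Z, ∀ z : ℂ, 0 < z.im → g (actZ γ z) = jZ γ z ^ k * g z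
  expansion : ∀ z : ℂ, 0 < z.im →
    HasSum (fun n : ℕ => b n * Complex.exp (2 * Real.pi * I * (n : ℂ) * z)) (g z)
  czero : b 0 = 0

/-- The term of the quadruple-sum form of the double Eisenstein series:
`(ad−bc)^{w−1} ((az+b)/(cz+d))^{−s} (cz+d)^{−k}` for `ad−bc > 0`. -/
def quadTerm (k : ℤ) (s w : ℂ) (z : ℂ) (v : ℤ × ℤ × ℤ × ℤ) : ℂ :=
  if 0 < v.1 * v.2.2.2 - v.2.1 * v.2.2.1 then
    ((v.1 * v.2.2.2 - v.2.1 * v.2.2.1 : ℤ) : ℂ) ^ (w - 1) *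
      (((v.1 : ℂ) * z + (v.2.1 : ℂ)) / ((v.2.2.1 : ℂ) * z + (v.2.2.2 : ℂ))) ^ (-s) *
      ((v.2.2.1 : ℂ) * z + (v.2.2.2 : ℂ)) ^ (-k)
  else 0

/-- The twisted version: `(ad−bc)^{w−1} ((az+b)/(cz+d) + x)^{−s} (cz+d)^{−k}` for `ad−bc > 0`. -/
def quadTermT (k : ℤ) (s w : ℂ) (x : ℚ) (z : ℂ) (v : ℤ × ℤ × ℤ × ℤ) : ℂ :=
  if 0 < v.1 * v.2.2.2 - v.2.1 * v.2.2.1 then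
    ((v.1 * v.2.2.2 - v.2.1 * v.2.2.1 : ℤ) : ℂ) ^ (w - 1) *
      (((v.1 : ℂ) * z + (v.2.1 : ℂ)) / ((v.2.2.1 : ℂ) * z + (v.2.2.2 : ℂ)) + (x : ℂ)) ^ (-s) *
      ((v.2.2.1 : ℂ) * z + (v.2.2.2 : ℂ)) ^ (-k)
  else 0

namespace Stmt10

/-- The bottom-row function as a map to `Fin 2 → ℤ`. -/
def iota (p : CP) : Fin 2 → ℤ := ![p.1.1, p.1.2]

lemma iota_injective : Function.Injective iota := by
  intro p q h
  have h0 := congrFun h 0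
  have h1 := congrFun h 1
  simp [iota] at h0 h1
  exact Subtype.ext (Prod.ext h0 h1)

lemma not_both_zero {c d : ℤ} (h : IsCoprime c d) : ¬(c = 0 ∧ d = 0) := by
  rintro ⟨rfl, rfl⟩
  exact (Int.isUnit_iff.mp (isCoprime_zero_left.mp h)).elim (by norm_num) (by norm_num)

lemma jP_ne_zero {p : ℤ × ℤ} (h : IsCoprime p.1 p.2) {z : ℂ} (hz : 0 < z.im) :
    jP p z ≠ 0 := by
  intro hJ
  have him : (jP p z).im = (p.1 : ℝ) * z.im := by
    simp [jP, Complex.add_im, Complex.mul_im]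

  have hre : (jP p z).re = (p.1 : ℝ) * z.re + (p.2 : ℝ) := by
    simp [jP, Complex.add_re, Complex.mul_re]
  rw [hJ] at him hre
  have h1 : p.1 = 0 := by
    by_contra hc
    have hne : (p.1 : ℝ) ≠ 0 := Int.cast_ne_zero.mpr hc
    rcases (by simpa using him.symm : p.1 = 0 ∨ z.im = 0) with h | h
    · exact hc h
    · exact hz.ne' h
  have h2 : p.2 = 0 := by
    rw [h1] at hre
    exact_mod_cast by simpa using hre.symm
  exact not_both_zero h ⟨h1, h2⟩

/-- Sign-normalization predicate on bottom rows. -/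
def Pos (p : ℤ × ℤ) : Prop := 0 < p.1 ∨ (p.1 = 0 ∧ 0 < p.2)

instance : DecidablePred Pos := fun p => by unfold Pos; infer_instance

lemma pos_neg_iff {p : ℤ × ℤ} (h : ¬(p.1 = 0 ∧ p.2 = 0)) :
    Pos (-p.1, -p.2) ↔ ¬ Pos p := by
  unfold Pos; dsimp only; omega

/-- The folding equivalence `Bool × CP1 ≃ CP`. -/
def foldEquiv : Bool × CP1 ≃ CP where
  toFun := fun bq =>
    if bq.1 then ⟨bq.2.1, bq.2.2.1⟩
    else ⟨(-bq.2.1.1, -bq.2.1.2), bq.2.2.1.neg_left.neg_right⟩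
  invFun := fun p =>
    if h : Pos p.1 then (true, ⟨p.1, p.2, h⟩)
    else (false, ⟨(-p.1.1, -p.1.2), p.2.neg_left.neg_right,
      (pos_neg_iff (not_both_zero p.2)).mpr h⟩)
  left_inv := by
    rintro ⟨b, q⟩
    rcases b with _ | _
    · have h1 : ¬ Pos (-q.1.1, -q.1.2) := by
        have := (pos_neg_iff (not_both_zero q.2.1)).mpr
        by_contra hc
        exact ((pos_neg_iff (not_both_zero q.2.1)).mp (by simpa using hc)) q.2.2
      simp only [if_neg, Bool.false_eq_true, if_false, ↓reduceIte, dif_neg h1]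
      exact Prod.ext rfl (Subtype.ext (by simp))
    · simp only [if_pos, ↓reduceIte]
      rw [dif_pos (show Pos q.1 from q.2.2)]
      rfl
  right_inv := by
    rintro ⟨p, hp⟩
    by_cases h : Pos p
    · simp [dif_pos h]
      rfl
    · simp only [dif_neg h]
      exact Subtype.ext (by simp)

end Stmt10
namespace Stmt10

lemma hasDerivAt_jP (p : ℤ × ℤ) (z : ℂ) : HasDerivAt (fun w => jP p w) ((p.1 : ℂ)) z := by
  simpa [jP] using ((hasDerivAt_id z).const_mul ((p.1 : ℂ))).add_const ((p.2 : ℂ))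

lemma hasDerivAt_mobiusP {p : ℤ × ℤ} (h : IsCoprime p.1 p.2) {z : ℂ} (hz : 0 < z.im) :
    HasDerivAt (mobiusP p h) ((jP p z) ^ (-2 : ℤ)) z := by
  set u := h.choose with hu
  set v := h.choose_spec.choose with hv
  have huv : u * p.1 + v * p.2 = 1 := h.choose_spec.choose_spec
  have hC : (u : ℂ) * p.1 + (v : ℂ) * p.2 = 1 := by exact_mod_cast congrArg (Int.cast : ℤ → ℂ) huv
  have hJ : jP p z ≠ 0 := jP_ne_zero h hz
  have hnum : HasDerivAt (fun w : ℂ => (v : ℂ) * w - (u : ℂ)) ((v : ℂ)) z := by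
    simpa using ((hasDerivAt_id z).const_mul ((v : ℂ))).sub_const ((u : ℂ))
  have hd := hnum.div (hasDerivAt_jP p z) hJ
  have hfun : mobiusP p h = fun w => ((v : ℂ) * w - (u : ℂ)) / jP p w := rfl
  rw [hfun]
  have hnumval : (v : ℂ) * jP p z - ((v : ℂ) * z - (u : ℂ)) * (p.1 : ℂ) = 1 := by
    simp only [jP]; linear_combination hC
  have hval : ((v : ℂ) * jP p z - ((v : ℂ) * z - (u : ℂ)) * (p.1 : ℂ)) / jP p z ^ 2
      = (jP p z) ^ (-2 : ℤ) := by
    rw [hnumval, zpow_neg, one_div]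
    norm_cast
  rw [hval] at hd
  exact hd

lemma im_mobiusP {p : ℤ × ℤ} (h : IsCoprime p.1 p.2) {z : ℂ} (hz : 0 < z.im) :
    (mobiusP p h z).im = z.im / Complex.normSq (jP p z) := by
  set u := h.choose with hu
  set v := h.choose_spec.choose with hv
  have huv : u * p.1 + v * p.2 = 1 := h.choose_spec.choose_spec
  have hC : (u : ℝ) * p.1 + (v : ℝ) * p.2 = 1 := by exact_mod_cast congrArg (Int.cast : ℤ → ℝ) huv
  have hfun : mobiusP p h z = ((v : ℂ) * z - (u : ℂ)) / jP p z := rfl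
  rw [hfun, Complex.div_im]
  have e1 : ((v : ℂ) * z - (u : ℂ)).im = (v : ℝ) * z.im := by simp
  have e2 : ((v : ℂ) * z - (u : ℂ)).re = (v : ℝ) * z.re - (u : ℝ) := by simp
  have e3 : (jP p z).re = (p.1 : ℝ) * z.re + (p.2 : ℝ) := by simp [jP]
  have e4 : (jP p z).im = (p.1 : ℝ) * z.im := by simp [jP]
  rw [e1, e2, e3, e4, div_sub_div_same]
  congr 1
  linear_combination z.im * hC

lemma im_mobiusP_nonneg {p : ℤ × ℤ} (h : IsCoprime p.1 p.2) {z : ℂ} (hz : 0 < z.im) :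
    0 ≤ (mobiusP p h z).im := by
  rw [im_mobiusP h hz]
  exact div_nonneg hz.le (Complex.normSq_nonneg _)

lemma norm_exp_mobius_le {p : ℤ × ℤ} (h : IsCoprime p.1 p.2) (m : ℕ) {z : ℂ} (hz : 0 < z.im) :
    ‖Complex.exp (2 * Real.pi * I * (m : ℂ) * mobiusP p h z)‖ ≤ 1 := by
  rw [Complex.norm_exp]
  have hre : (2 * (Real.pi : ℂ) * I * (m : ℂ) * mobiusP p h z).re
      = -(2 * Real.pi * m * (mobiusP p h z).im) := by
    set w := mobiusP p h z
    have hrw : 2 * (Real.pi : ℂ) * I * (m : ℂ) * w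
        = Complex.I * ((((2 : ℝ) * Real.pi * m : ℝ) : ℂ) * w) := by push_cast; ring
    rw [hrw]
    simp [Complex.mul_re, Complex.mul_im]
  rw [hre, Real.exp_le_one_iff, neg_nonpos]
  exact mul_nonneg (mul_nonneg (by positivity) (Nat.cast_nonneg m)) (im_mobiusP_nonneg h hz)

lemma exp_mobius_neg {c d : ℤ} (h1 : IsCoprime c d) (h2 : IsCoprime (-c) (-d)) (m : ℕ)
    {z : ℂ} (hz : 0 < z.im) :
    Complex.exp (2 * Real.pi * I * (m : ℂ) * mobiusP (-c, -d) h2 z)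
      = Complex.exp (2 * Real.pi * I * (m : ℂ) * mobiusP (c, d) h1 z) := by
  set u1 := h1.choose with hu1
  set v1 := h1.choose_spec.choose with hv1
  have huv1 : u1 * c + v1 * d = 1 := h1.choose_spec.choose_spec
  set u2 := h2.choose with hu2
  set v2 := h2.choose_spec.choose with hv2
  have huv2 : u2 * (-c) + v2 * (-d) = 1 := h2.choose_spec.choose_spec
  have key : (u1 + u2) * c + (v1 + v2) * d = 0 := by linear_combination huv1 - huv2
  have hEx : ∃ t : ℤ, u1 + u2 = t * d ∧ v1 + v2 = -(t * c) := by
    by_cases hd : d = 0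
    · have hcu : IsUnit c := isCoprime_zero_right.mp (hd ▸ h1)
      have hcc : c * c = 1 := by
        rcases Int.isUnit_iff.mp hcu with h | h <;> simp [h]
      refine ⟨-((v1 + v2) * c), ?_, ?_⟩
      · have hc0 : c ≠ 0 := by rintro rfl; norm_num at hcc
        have : (u1 + u2) * c = 0 := by rw [hd] at key; linarith [key]
        have h0 : u1 + u2 = 0 := by
          rcases mul_eq_zero.mp this with h | h
          · exact h
          · exact absurd h hc0
        simp [h0, hd]
      · linear_combination (-(v1 + v2)) * hcc
    · have hdvd : d ∣ (u1 + u2) * c := ⟨-(v1 + v2), by linear_combination key⟩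
      obtain ⟨t, ht⟩ := h1.symm.dvd_of_dvd_mul_right hdvd
      refine ⟨t, by linarith [ht], ?_⟩
      have h0 : d * ((v1 + v2) + t * c) = 0 := by linear_combination key - c * ht
      rcases mul_eq_zero.mp h0 with h | h
      · exact absurd h hd
      · linarith [h]
  obtain ⟨t, hU, hV⟩ := hEx
  have hUc : (u1 : ℂ) + u2 = (t : ℂ) * d := by exact_mod_cast congrArg (Int.cast : ℤ → ℂ) hU
  have hVc : (v1 : ℂ) + v2 = -((t : ℂ) * c) := by exact_mod_cast congrArg (Int.cast : ℤ → ℂ) hV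
  have hJ : jP (c, d) z ≠ 0 := jP_ne_zero h1 hz
  have hmob : mobiusP (-c, -d) h2 z = mobiusP (c, d) h1 z + (t : ℂ) := by
    have hfun2 : mobiusP (-c, -d) h2 z = ((v2 : ℂ) * z - (u2 : ℂ)) / jP (-c, -d) z := rfl
    have hfun1 : mobiusP (c, d) h1 z = ((v1 : ℂ) * z - (u1 : ℂ)) / jP (c, d) z := rfl
    have hJn : jP (-c, -d) z = -(jP (c, d) z) := by simp [jP]; ring
    have hnum : -((v2 : ℂ) * z - (u2 : ℂ)) = ((v1 : ℂ) * z - (u1 : ℂ)) + (t : ℂ) * jP (c, d) z := by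
      simp only [jP]
      push_cast
      linear_combination (-z) * hVc + hUc
    rw [hfun1, hfun2, hJn, div_neg, ← neg_div, hnum, add_div, mul_div_assoc, div_self hJ, mul_one]
  rw [hmob, mul_add, Complex.exp_add]
  have hrw : 2 * (Real.pi : ℂ) * I * (m : ℂ) * (t : ℂ)
      = (((m : ℤ) * t : ℤ) : ℂ) * (2 * Real.pi * I) := by push_cast; ring
  rw [hrw, Complex.exp_int_mul_two_pi_mul_I, mul_one]

end Stmt10
namespace Stmt10

/-- The generalized series term. -/
def A (K : ℤ) (m n : ℕ) (p : CP) (z : ℂ) : ℂ :=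
  Complex.exp (2 * Real.pi * I * (m : ℂ) * mobiusCP p z) * ((p.1.1 : ℂ)) ^ n *
    (jP p.1 z) ^ (-(K + (n : ℤ)))

/-- The generalized series. -/
def S (K : ℤ) (m n : ℕ) (z : ℂ) : ℂ := (1 / 2) * ∑' p : CP, A K m n p z

def negCP (p : CP) : CP := ⟨(-p.1.1, -p.1.2), p.2.neg_left.neg_right⟩

def inclCP (q : CP1) : CP := ⟨q.1, q.2.1⟩

lemma jP_neg (p : ℤ × ℤ) (z : ℂ) : jP (-p.1, -p.2) z = -(jP p z) := by
  simp only [jP]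
  push_cast
  ring

lemma A_neg (K : ℤ) (hKe : Even K) (m n : ℕ) (p : CP) {z : ℂ} (hz : 0 < z.im) :
    A K m n (negCP p) z = A K m n p z := by
  have key : ((-1 : ℂ)) ^ (-(K + (n : ℤ))) * ((-1 : ℂ)) ^ (n : ℕ) = 1 := by
    rw [zpow_neg, zpow_add₀ (by norm_num : (-1 : ℂ) ≠ 0), hKe.neg_one_zpow, one_mul,
      zpow_natCast]
    exact inv_mul_cancel₀ (pow_ne_zero n (by norm_num))
  have hexp := exp_mobius_neg (c := p.1.1) (d := p.1.2) p.2 (negCP p).2 m hz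
  have hmm : mobiusP (p.1.1, p.1.2) p.2 z = mobiusCP p z := rfl
  rw [hmm] at hexp
  show Complex.exp (2 * Real.pi * I * (m : ℂ) * mobiusP (-p.1.1, -p.1.2) (negCP p).2 z) *
      (((-p.1.1 : ℤ) : ℂ)) ^ n * (jP (-p.1.1, -p.1.2) z) ^ (-(K + (n : ℤ))) = _
  rw [hexp, show jP (-p.1.1, -p.1.2) z = -(jP p.1 z) from jP_neg p.1 z, Int.cast_neg,
    neg_eq_neg_one_mul ((p.1.1 : ℂ)), neg_eq_neg_one_mul (jP p.1 z), mul_zpow, mul_pow]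
  show _ = Complex.exp (2 * Real.pi * I * (m : ℂ) * mobiusCP p z) * ((p.1.1 : ℂ)) ^ n *
    (jP p.1 z) ^ (-(K + (n : ℤ)))
  linear_combination (Complex.exp (2 * Real.pi * I * (m : ℂ) * mobiusCP p z) *
    ((p.1.1 : ℂ)) ^ n * (jP p.1 z) ^ (-(K + (n : ℤ)))) * key

lemma A_bound (K : ℤ) (hK0 : 0 ≤ K) (m n : ℕ) (p : CP) {w : ℂ} (hw : 0 < w.im) :
    ‖A K m n p w‖ ≤ (1 / w.im) ^ n * ‖jP p.1 w‖ ^ (-(K : ℝ)) := by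
  have hJ : jP p.1 w ≠ 0 := jP_ne_zero p.2 hw
  have habs : 0 < ‖jP p.1 w‖ := norm_pos_iff.mpr hJ
  have hnorm : ‖A K m n p w‖ = ‖Complex.exp (2 * Real.pi * I * (m : ℂ) * mobiusCP p w)‖ *
      ‖(p.1.1 : ℂ)‖ ^ n * ‖jP p.1 w‖ ^ (-(K + (n : ℤ))) := by
    simp [A, map_mul, map_pow, map_zpow₀]
  rw [hnorm]
  have h1 : ‖Complex.exp (2 * Real.pi * I * (m : ℂ) * mobiusCP p w)‖ ≤ 1 :=
    norm_exp_mobius_le p.2 m hw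
  have hsplit : ‖jP p.1 w‖ ^ (-(K + (n : ℤ)))
      = ‖jP p.1 w‖ ^ (-K) * (‖jP p.1 w‖ ^ (n : ℕ))⁻¹ := by
    rw [← zpow_natCast (‖jP p.1 w‖) n, ← zpow_neg, ← zpow_add₀ habs.ne']
    congr 1
    ring
  have hc : ‖(p.1.1 : ℂ)‖ * w.im ≤ ‖jP p.1 w‖ := by
    have him : (jP p.1 w).im = (p.1.1 : ℝ) * w.im := by simp [jP]
    have h2 := Complex.abs_im_le_norm (jP p.1 w)
    rw [him] at h2
    calc ‖(p.1.1 : ℂ)‖ * w.im = |(p.1.1 : ℝ)| * |w.im| := by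
          rw [Complex.norm_intCast, abs_of_pos hw]
      _ = |(p.1.1 : ℝ) * w.im| := (abs_mul _ _).symm
      _ ≤ _ := h2
  have hcn : ‖(p.1.1 : ℂ)‖ ^ n * (‖jP p.1 w‖ ^ (n : ℕ))⁻¹
      ≤ (1 / w.im) ^ n := by
    rw [← div_eq_mul_inv, ← div_pow]
    apply pow_le_pow_left₀ (by positivity)
    rw [div_le_div_iff₀ habs hw]
    linarith [hc]
  have hKr : ‖jP p.1 w‖ ^ (-K) = ‖jP p.1 w‖ ^ (-(K : ℝ)) := by
    rw [← Real.rpow_intCast]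
    norm_num
  have hJKnn : 0 ≤ ‖jP p.1 w‖ ^ (-K) := zpow_nonneg habs.le _
  calc ‖Complex.exp (2 * Real.pi * I * (m : ℂ) * mobiusCP p w)‖ *
        ‖(p.1.1 : ℂ)‖ ^ n * ‖jP p.1 w‖ ^ (-(K + (n : ℤ)))
      = ‖Complex.exp (2 * Real.pi * I * (m : ℂ) * mobiusCP p w)‖ *
        ((‖(p.1.1 : ℂ)‖ ^ n * (‖jP p.1 w‖ ^ (n : ℕ))⁻¹) *
          ‖jP p.1 w‖ ^ (-K)) := by rw [hsplit]; ring
    _ ≤ 1 * ((1 / w.im) ^ n * ‖jP p.1 w‖ ^ (-K)) := by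
        apply mul_le_mul h1 (mul_le_mul_of_nonneg_right hcn hJKnn) ?_ (by norm_num)
        apply mul_nonneg (mul_nonneg (by positivity) (by positivity)) hJKnn
    _ = (1 / w.im) ^ n * ‖jP p.1 w‖ ^ (-(K : ℝ)) := by rw [one_mul, hKr]

lemma A_bound_strip (K : ℤ) (hK0 : 0 ≤ K) (m n : ℕ) {Av Bv : ℝ} (hBv : 0 < Bv) (p : CP)
    {w : ℂ} (hw1 : |w.re| ≤ Av) (hw2 : Bv ≤ w.im) :
    ‖A K m n p w‖ ≤ (1 / Bv) ^ n *
      (EisensteinSeries.r ⟨⟨Av, Bv⟩, hBv⟩ ^ (-(K : ℝ)) * ‖iota p‖ ^ (-(K : ℝ))) := by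
  have hw : 0 < w.im := lt_of_lt_of_le hBv hw2
  refine (A_bound K hK0 m n p hw).trans ?_
  have hstrip := EisensteinSeries.summand_bound_of_mem_verticalStrip
    (z := ⟨w, hw⟩) (k := (K : ℝ)) (by positivity) (iota p) hBv ⟨hw1, hw2⟩
  have hxw : (iota p 0 : ℂ) * ((⟨w, hw⟩ : UpperHalfPlane) : ℂ) + (iota p 1 : ℂ) = jP p.1 w := by
    simp [iota, jP]
  rw [← hxw]
  apply mul_le_mul ?_ hstrip (by positivity) (by positivity)
  apply pow_le_pow_left₀ (by positivity)
  exact one_div_le_one_div_of_le hBv hw2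

lemma summable_A (K : ℤ) (hK : 3 ≤ K) (m n : ℕ) {z : ℂ} (hz : 0 < z.im) :
    Summable fun p : CP => A K m n p z := by
  have hsum : Summable fun p : CP => ‖iota p‖ ^ (-(K : ℝ)) :=
    (EisensteinSeries.summable_one_div_norm_rpow (by exact_mod_cast hK)).comp_injective
      iota_injective
  apply Summable.of_norm_bounded
    (g := fun p : CP => (1 / z.im) ^ n *
      (EisensteinSeries.r ⟨⟨|z.re|, z.im⟩, hz⟩ ^ (-(K : ℝ)) * ‖iota p‖ ^ (-(K : ℝ))))
    (((hsum.mul_left _).mul_left _))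
  intro p
  exact A_bound_strip K (by omega) m n hz p le_rfl le_rfl

lemma hasDerivAt_A (K : ℤ) (m n : ℕ) (p : CP) {z : ℂ} (hz : 0 < z.im) :
    HasDerivAt (fun w => A K m n p w)
      (2 * Real.pi * I * (m : ℂ) * A (K + 2) m n p z
        - ((K : ℂ) + (n : ℂ)) * A K m (n + 1) p z) z := by
  have hJ : jP p.1 z ≠ 0 := jP_ne_zero p.2 hz
  have hmob : HasDerivAt (fun w => mobiusCP p w) ((jP p.1 z) ^ (-2 : ℤ)) z :=
    hasDerivAt_mobiusP p.2 hz
  have hexp : HasDerivAt (fun w => Complex.exp (2 * Real.pi * I * (m : ℂ) * mobiusCP p w))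
      (Complex.exp (2 * Real.pi * I * (m : ℂ) * mobiusCP p z) *
        (2 * Real.pi * I * (m : ℂ) * (jP p.1 z) ^ (-2 : ℤ))) z :=
    (hmob.const_mul (2 * Real.pi * I * (m : ℂ))).cexp
  have hpow : HasDerivAt (fun w => (jP p.1 w) ^ (-(K + (n : ℤ))))
      (((-(K + (n : ℤ)) : ℤ) : ℂ) * (jP p.1 z) ^ (-(K + (n : ℤ)) - 1) * (p.1.1 : ℂ)) z := by
    have := (hasDerivAt_zpow (-(K + (n : ℤ))) (jP p.1 z) (Or.inl hJ)).comp z (hasDerivAt_jP p.1 z)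
    simpa [mul_comm, mul_assoc, Function.comp_def] using this
  have hprod := (hexp.mul_const (((p.1.1 : ℂ)) ^ n)).mul hpow
  have hfun : (fun w => A K m n p w) = fun w =>
      (Complex.exp (2 * Real.pi * I * (m : ℂ) * mobiusCP p w) * ((p.1.1 : ℂ)) ^ n) *
        (jP p.1 w) ^ (-(K + (n : ℤ))) := by
    funext w
    rw [A]
  rw [hfun]
  refine hprod.congr_deriv ?_
  have e1 : (jP p.1 z) ^ (-((K + 2) + (n : ℤ)))
      = (jP p.1 z) ^ (-(K + (n : ℤ))) * (jP p.1 z) ^ (-2 : ℤ) := by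
    rw [← zpow_add₀ hJ]
    congr 1
    ring
  have e2 : (jP p.1 z) ^ (-(K + ((n + 1 : ℕ) : ℤ)))
      = (jP p.1 z) ^ (-(K + (n : ℤ)) - 1) := by
    congr 1
    push_cast
    ring
  rw [A, A, e1, e2]
  push_cast
  ring

end Stmt10
namespace Stmt10

lemma hasDerivAt_S (K : ℤ) (hK : 3 ≤ K) (m n : ℕ) {z : ℂ} (hz : 0 < z.im) :
    HasDerivAt (S K m n)
      (2 * Real.pi * I * (m : ℂ) * S (K + 2) m n z
        - ((K : ℂ) + (n : ℂ)) * S K m (n + 1) z) z := by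
  set Av := |z.re| + 1 with hAv
  set Bv := z.im / 2 with hBvdef
  have hBv : 0 < Bv := by rw [hBvdef]; positivity
  set V : Set ℂ := {w : ℂ | |w.re| < Av ∧ Bv < w.im} with hV
  have hVopen : IsOpen V := by
    have h1 : IsOpen {w : ℂ | |w.re| < Av} :=
      isOpen_lt (Complex.continuous_re.abs) continuous_const
    have h2 : IsOpen {w : ℂ | Bv < w.im} := isOpen_lt continuous_const Complex.continuous_im
    exact h1.inter h2
  have hzV : z ∈ V := by
    constructor
    · rw [hAv]; linarith [abs_nonneg z.re]
    · rw [hBvdef]; linarith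
  have hVpos : ∀ w ∈ V, 0 < w.im := fun w hw => lt_trans hBv hw.2
  set r₀ := EisensteinSeries.r ⟨⟨Av, Bv⟩, hBv⟩ with hr₀
  have hu : ∀ (K' : ℤ) (n' : ℕ), 3 ≤ K' →
      Summable (fun p : CP => (1 / Bv) ^ n' * (r₀ ^ (-(K' : ℝ)) * ‖iota p‖ ^ (-(K' : ℝ)))) :=
    fun K' n' h =>
      (((EisensteinSeries.summable_one_div_norm_rpow
        (by exact_mod_cast h)).comp_injective iota_injective).mul_left _).mul_left _
  have hbound : ∀ (K' : ℤ) (n' : ℕ), 0 ≤ K' → ∀ (p : CP) (w : ℂ), w ∈ V →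
      ‖A K' m n' p w‖ ≤ (1 / Bv) ^ n' * (r₀ ^ (-(K' : ℝ)) * ‖iota p‖ ^ (-(K' : ℝ))) :=
    fun K' n' h p w hw => A_bound_strip K' h m n' hBv p (le_of_lt hw.1) (le_of_lt hw.2)
  have hdiff : ∀ p : CP, DifferentiableOn ℂ (fun w => A K m n p w) V := fun p w hw =>
    ((hasDerivAt_A K m n p (hVpos w hw)).differentiableAt).differentiableWithinAt
  have HS := Complex.hasSum_deriv_of_summable_norm (F := fun (p : CP) (w : ℂ) => A K m n p w)
    (hu K n hK) hdiff hVopen (fun p w hw => hbound K n (by omega) p w hw) hzV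
  rw [show (fun p : CP => deriv (fun w => A K m n p w) z)
      = fun p : CP => (2 * Real.pi * I * (m : ℂ) * A (K + 2) m n p z
          - ((K : ℂ) + (n : ℂ)) * A K m (n + 1) p z)
    from funext fun p => (hasDerivAt_A K m n p hz).deriv] at HS
  have h1 : Summable fun p : CP => A (K + 2) m n p z := summable_A (K + 2) (by omega) m n hz
  have h2 : Summable fun p : CP => A K m (n + 1) p z := summable_A K hK m (n + 1) hz
  have HS2 : HasSum (fun p : CP => (2 * Real.pi * I * (m : ℂ) * A (K + 2) m n p z
      - ((K : ℂ) + (n : ℂ)) * A K m (n + 1) p z))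
      (2 * Real.pi * I * (m : ℂ) * ∑' p : CP, A (K + 2) m n p z
        - ((K : ℂ) + (n : ℂ)) * ∑' p : CP, A K m (n + 1) p z) :=
    (h1.hasSum.mul_left _).sub (h2.hasSum.mul_left _)
  have hval := HS.unique HS2
  have hDA : DifferentiableAt ℂ (fun w => ∑' p : CP, A K m n p w) z :=
    (Complex.differentiableOn_tsum_of_summable_norm (hu K n hK) hdiff hVopen
      (fun p w hw => hbound K n (by omega) p w hw)).differentiableAt (hVopen.mem_nhds hzV)
  have hD : HasDerivAt (fun w => ∑' p : CP, A K m n p w)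
      (2 * Real.pi * I * (m : ℂ) * ∑' p : CP, A (K + 2) m n p z
        - ((K : ℂ) + (n : ℂ)) * ∑' p : CP, A K m (n + 1) p z) z := by
    rw [← hval]
    exact hDA.hasDerivAt
  have hfin := hD.const_mul ((1 : ℂ) / 2)
  have hSfun : S K m n = fun w => (1 / 2 : ℂ) * ∑' p : CP, A K m n p w := rfl
  rw [hSfun]
  refine hfin.congr_deriv ?_
  rw [S, S]
  ring

lemma tsum_A_fold (K : ℤ) (hKe : Even K) (hK : 3 ≤ K) (m n : ℕ) {z : ℂ} (hz : 0 < z.im) :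
    ∑' p : CP, A K m n p z = 2 * ∑' q : CP1, A K m n (inclCP q) z := by
  have hsum : Summable fun p : CP => A K m n p z := summable_A K hK m n hz
  rw [← foldEquiv.tsum_eq (fun p => A K m n p z)]
  have hterm : ∀ bq : Bool × CP1, A K m n (foldEquiv bq) z = A K m n (inclCP bq.2) z := by
    rintro ⟨b, q⟩
    cases b
    · exact A_neg K hKe m n (inclCP q) hz
    · rfl
  rw [show (fun bq : Bool × CP1 => A K m n (foldEquiv bq) z)
      = fun bq : Bool × CP1 => A K m n (inclCP bq.2) z from funext hterm]
  have hsum2 : Summable fun bq : Bool × CP1 => A K m n (inclCP bq.2) z := by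
    refine (Summable.congr ((foldEquiv.summable_iff (f := fun p => A K m n p z)).mpr hsum) ?_)
    exact hterm
  rw [hsum2.tsum_prod, tsum_fintype, Fintype.sum_bool]
  ring

lemma poincare_eq_S (K : ℤ) (hKe : Even K) (hK : 3 ≤ K) (m : ℕ) {z : ℂ} (hz : 0 < z.im) :
    poincare K m z = S K m 0 z := by
  rw [S, tsum_A_fold K hKe hK m 0 hz, poincare]
  rw [show (1 / 2 : ℂ) * (2 * ∑' q : CP1, A K m 0 (inclCP q) z)
      = ∑' q : CP1, A K m 0 (inclCP q) z by ring]
  refine tsum_congr fun q => ?_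
  rw [A]
  have h0 : mobiusCP (inclCP q) z = mobiusCP1 q z := rfl
  rw [h0]
  simp only [pow_zero, mul_one, Nat.cast_zero, add_zero]
  rfl

lemma Qser_eq_S (K : ℤ) (hKe : Even K) (hK : 3 ≤ K) (m n : ℕ) {z : ℂ} (hz : 0 < z.im) :
    Qser K n m z = S K m n z := by
  cases n with
  | zero =>
    rw [show Qser K 0 m z = poincare K m z from by rw [Qser]; simp]
    exact poincare_eq_S K hKe hK m hz
  | succ n =>
    rw [Qser, S]
    simp only [Nat.succ_ne_zero, if_false]
    rfl

end Stmt10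
namespace Stmt10

/-- The coefficient in the derivative formula. -/
def coef (k m j l : ℕ) : ℂ :=
  (-1 : ℂ) ^ (l + j) * (2 * Real.pi * I * (m : ℂ)) ^ l *
    ((Nat.factorial j : ℂ) / (Nat.factorial l : ℂ)) * (Nat.choose (k + j - 1) (k + l - 1) : ℂ)

lemma coef_zero_zero (k m : ℕ) : coef k m 0 0 = 1 := by
  simp [coef, Nat.choose_self]

lemma coef_top (k m j : ℕ) (hk : 1 ≤ k) : coef k m j (j + 1) = 0 := by
  unfold coef
  rw [show k + (j + 1) - 1 = k + j by omega,
    Nat.choose_eq_zero_of_lt (show k + j - 1 < k + j by omega)]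
  simp

lemma factorial_cast_ne_zero (x : ℕ) : ((Nat.factorial x : ℕ) : ℂ) ≠ 0 :=
  Nat.cast_ne_zero.mpr (Nat.factorial_ne_zero x)

lemma coef_rec_zero (k m j : ℕ) (hk : 1 ≤ k) :
    coef k m (j + 1) 0 = -((k : ℂ) + j) * coef k m j 0 := by
  obtain ⟨K0, rfl⟩ : ∃ K0, k = K0 + 1 := ⟨k - 1, by omega⟩
  have e1 : K0 + 1 + (j + 1) - 1 = K0 + j + 1 := by omega
  have e2 : K0 + 1 + j - 1 = K0 + j := by omega
  have e3 : K0 + 1 + 0 - 1 = K0 := by omega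
  have H2n : Nat.factorial (j + 1) * Nat.choose (K0 + j + 1) K0
      = (K0 + 1 + j) * Nat.factorial j * Nat.choose (K0 + j) K0 := by
    have a1 : (K0 + j + 1).choose (j + 1) = (K0 + j + 1).choose K0 := by
      have h := Nat.choose_symm (show K0 ≤ K0 + j + 1 by omega)
      rwa [show K0 + j + 1 - K0 = j + 1 by omega] at h
    have a2 : (K0 + j).choose j = (K0 + j).choose K0 := by
      have h := Nat.choose_symm (show K0 ≤ K0 + j by omega)
      rwa [show K0 + j - K0 = j by omega] at h
    have a3 : (K0 + j + 1) * ((K0 + j).choose j) = (K0 + j + 1).choose (j + 1) * (j + 1) :=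
      Nat.add_one_mul_choose_eq (K0 + j) j
    calc Nat.factorial (j + 1) * Nat.choose (K0 + j + 1) K0
        = Nat.factorial j * ((K0 + j + 1).choose (j + 1) * (j + 1)) := by
          rw [a1, Nat.factorial_succ]; ring
      _ = Nat.factorial j * ((K0 + j + 1) * ((K0 + j).choose j)) := by rw [← a3]
      _ = (K0 + 1 + j) * Nat.factorial j * Nat.choose (K0 + j) K0 := by rw [a2]; ring
  have H2 : ((Nat.factorial (j + 1) : ℂ)) * (Nat.choose (K0 + j + 1) K0 : ℂ)
      = ((K0 : ℂ) + 1 + j) * (Nat.factorial j : ℂ) * (Nat.choose (K0 + j) K0 : ℂ) := by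
    exact_mod_cast congrArg (Nat.cast : ℕ → ℂ) H2n
  unfold coef
  rw [e1, e2, e3]
  simp only [Nat.factorial_zero, Nat.cast_one, div_one, pow_zero, mul_one]
  rw [show (0 : ℕ) + (j + 1) = (0 + j) + 1 by omega, pow_succ]
  push_cast at H2 ⊢
  linear_combination (-(-1 : ℂ) ^ (0 + j)) * H2

set_option maxHeartbeats 1000000 in
lemma coef_rec (k m j l : ℕ) (hk : 1 ≤ k) (hlj : l ≤ j) :
    coef k m (j + 1) (l + 1)
      = (2 * Real.pi * I * (m : ℂ)) * coef k m j l
        - ((k : ℂ) + j + l + 1) * coef k m j (l + 1) := by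
  rcases Nat.lt_or_ge l j with hlt | hge
  · -- main case l < j
    obtain ⟨K0, rfl⟩ : ∃ K0, k = K0 + 1 := ⟨k - 1, by omega⟩
    obtain ⟨t, rfl⟩ : ∃ t, j = l + 1 + t := ⟨j - l - 1, by omega⟩
    have e1 : K0 + 1 + (l + 1 + t + 1) - 1 = K0 + l + t + 2 := by omega
    have e2 : K0 + 1 + (l + 1) - 1 = K0 + l + 1 := by omega
    have e3 : K0 + 1 + (l + 1 + t) - 1 = K0 + l + t + 1 := by omega
    have e4 : K0 + 1 + l - 1 = K0 + l := by omega
    have h1 := factorial_cast_ne_zero l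
    have h2 := factorial_cast_ne_zero t
    have h3 := factorial_cast_ne_zero (K0 + l)
    have h4 := factorial_cast_ne_zero (l + t)
    have H : ((Nat.factorial (l + t + 2) : ℂ) / (Nat.factorial (l + 1) : ℂ))
          * (Nat.choose (K0 + l + t + 2) (K0 + l + 1) : ℂ)
        = ((Nat.factorial (l + t + 1) : ℂ) / (Nat.factorial l : ℂ))
            * (Nat.choose (K0 + l + t + 1) (K0 + l) : ℂ)
          + ((K0 : ℂ) + 2 * l + t + 3)
            * ((Nat.factorial (l + t + 1) : ℂ) / (Nat.factorial (l + 1) : ℂ))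
            * (Nat.choose (K0 + l + t + 1) (K0 + l + 1) : ℂ) := by
      rw [Nat.cast_choose ℂ (show K0 + l + 1 ≤ K0 + l + t + 2 by omega),
        Nat.cast_choose ℂ (show K0 + l ≤ K0 + l + t + 1 by omega),
        Nat.cast_choose ℂ (show K0 + l + 1 ≤ K0 + l + t + 1 by omega),
        show K0 + l + t + 2 - (K0 + l + 1) = t + 1 by omega,
        show K0 + l + t + 1 - (K0 + l) = t + 1 by omega,
        show K0 + l + t + 1 - (K0 + l + 1) = t by omega]
      have F1 : ((Nat.factorial (l + t + 2) : ℕ) : ℂ)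
          = ((l + t + 2 : ℕ) : ℂ) * ((Nat.factorial (l + t + 1) : ℕ) : ℂ) := by
        exact_mod_cast (by rw [show l + t + 2 = (l + t + 1) + 1 by omega]
                           exact Nat.factorial_succ _ :
          Nat.factorial (l + t + 2) = (l + t + 2) * Nat.factorial (l + t + 1))
      have F2 : ((Nat.factorial (K0 + l + t + 2) : ℕ) : ℂ)
          = ((K0 + l + t + 2 : ℕ) : ℂ) * ((Nat.factorial (K0 + l + t + 1) : ℕ) : ℂ) := by
        exact_mod_cast (by rw [show K0 + l + t + 2 = (K0 + l + t + 1) + 1 by omega]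
                           exact Nat.factorial_succ _ :
          Nat.factorial (K0 + l + t + 2) = (K0 + l + t + 2) * Nat.factorial (K0 + l + t + 1))
      have F3 : ((Nat.factorial (l + 1) : ℕ) : ℂ)
          = ((l + 1 : ℕ) : ℂ) * ((Nat.factorial l : ℕ) : ℂ) := by
        exact_mod_cast Nat.factorial_succ l
      have F4 : ((Nat.factorial (t + 1) : ℕ) : ℂ)
          = ((t + 1 : ℕ) : ℂ) * ((Nat.factorial t : ℕ) : ℂ) := by
        exact_mod_cast Nat.factorial_succ t
      have F5 : ((Nat.factorial (K0 + l + 1) : ℕ) : ℂ)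
          = ((K0 + l + 1 : ℕ) : ℂ) * ((Nat.factorial (K0 + l) : ℕ) : ℂ) := by
        exact_mod_cast Nat.factorial_succ (K0 + l)
      have h5 := factorial_cast_ne_zero (l + 1)
      have h6 := factorial_cast_ne_zero (t + 1)
      have h7 := factorial_cast_ne_zero (K0 + l + 1)
      have h8 := factorial_cast_ne_zero (l + t + 1)
      have h9 := factorial_cast_ne_zero (K0 + l + t + 1)
      field_simp
      simp only [F1, F2, F3, F4, F5]
      push_cast
      ring
    unfold coef
    rw [e1, e2, e3, e4, show l + 1 + t + 1 = l + t + 2 by omega,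
      show l + 1 + t = l + t + 1 by omega]
    push_cast at H ⊢
    linear_combination (-(-1 : ℂ) ^ (2 * l + t) * (2 * Real.pi * I * (m : ℂ)) ^ (l + 1)) * H
  · -- top case l = j
    have hje : l = j := le_antisymm hlj hge
    subst hje
    rw [coef_top k m l hk]
    unfold coef
    rw [div_self (factorial_cast_ne_zero (l + 1)), div_self (factorial_cast_ne_zero l),
      Nat.choose_self, Nat.choose_self,
      show (l + 1) + (l + 1) = (l + l) + 2 by omega, pow_add, neg_one_sq, pow_succ]
    ring

end Stmt10
namespace Stmt10

lemma master (k : ℕ) (hk : 4 ≤ k) (hke : Even k) (m : ℕ) (j : ℕ) :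
    ∀ z : ℂ, 0 < z.im →
      iteratedDeriv j (poincare (k : ℤ) m) z
        = ∑ l ∈ Finset.range (j + 1), coef k m j l * Qser ((k : ℤ) + 2 * l) (j - l) m z := by
  have hQS : ∀ (n : ℕ) (l : ℕ) (w : ℂ), 0 < w.im →
      Qser ((k : ℤ) + 2 * l) n m w = S ((k : ℤ) + 2 * l) m n w := fun n l w hw =>
    Qser_eq_S _ (((Int.even_coe_nat k).mpr hke).add (even_two_mul _)) (by omega) m n hw
  induction j with
  | zero =>
    intro z hz
    rw [iteratedDeriv_zero, Finset.sum_range_one, coef_zero_zero, one_mul]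
    rw [show (k : ℤ) + 2 * ((0 : ℕ) : ℤ) = (k : ℤ) by push_cast; ring]
    simp [Qser]
  | succ j ih =>
    intro z hz
    rw [iteratedDeriv_succ]
    have hU : IsOpen {w : ℂ | 0 < w.im} := isOpen_lt continuous_const Complex.continuous_im
    have heq : iteratedDeriv j (poincare (k : ℤ) m) =ᶠ[nhds z]
        (fun w => ∑ l ∈ Finset.range (j + 1),
          coef k m j l * S ((k : ℤ) + 2 * l) m (j - l) w) := by
      filter_upwards [hU.mem_nhds hz] with w hw
      rw [ih w hw]
      exact Finset.sum_congr rfl fun l hl => by rw [hQS (j - l) l w hw]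
    rw [heq.deriv_eq]
    have HD : HasDerivAt
        (fun w => ∑ l ∈ Finset.range (j + 1), coef k m j l * S ((k : ℤ) + 2 * l) m (j - l) w)
        (∑ l ∈ Finset.range (j + 1), coef k m j l *
          (2 * Real.pi * I * (m : ℂ) * S ((k : ℤ) + 2 * l + 2) m (j - l) z
            - ((((k : ℤ) + 2 * l : ℤ) : ℂ) + ((j - l : ℕ) : ℂ))
              * S ((k : ℤ) + 2 * l) m (j - l + 1) z)) z :=
      HasDerivAt.fun_sum fun l hl =>
        ((hasDerivAt_S ((k : ℤ) + 2 * l) (by omega) m (j - l) hz).const_mul _)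
    rw [HD.deriv]
    rw [show (∑ l ∈ Finset.range (j + 1 + 1),
          coef k m (j + 1) l * Qser ((k : ℤ) + 2 * l) (j + 1 - l) m z)
        = ∑ l ∈ Finset.range (j + 1 + 1), coef k m (j + 1) l * S ((k : ℤ) + 2 * l) m (j + 1 - l) z
      from Finset.sum_congr rfl fun l hl => by rw [hQS (j + 1 - l) l z hz]]
    set G : ℕ → ℂ := fun l => S ((k : ℤ) + 2 * (l : ℤ)) m (j + 1 - l) z with hG
    have hg : ∑ l ∈ Finset.range (j + 1), ((k : ℂ) + (j : ℂ) + (l : ℂ)) * coef k m j l * G l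
        = ∑ l ∈ Finset.range (j + 1),
            ((k : ℂ) + (j : ℂ) + ((l : ℂ) + 1)) * coef k m j (l + 1) * G (l + 1)
          + ((k : ℂ) + (j : ℂ) + ((0 : ℕ) : ℂ)) * coef k m j 0 * G 0 := by
      have h1 := Finset.sum_range_succ'
        (fun l => ((k : ℂ) + (j : ℂ) + (l : ℂ)) * coef k m j l * G l) (j + 1)
      have h2 := Finset.sum_range_succ
        (fun l => ((k : ℂ) + (j : ℂ) + (l : ℂ)) * coef k m j l * G l) (j + 1)
      rw [coef_top k m j (by omega)] at h2
      simp only [mul_zero, zero_mul, add_zero] at h2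
      rw [← h2, h1]
      push_cast
      ring
    calc ∑ l ∈ Finset.range (j + 1), coef k m j l *
          (2 * Real.pi * I * (m : ℂ) * S ((k : ℤ) + 2 * l + 2) m (j - l) z
            - ((((k : ℤ) + 2 * l : ℤ) : ℂ) + ((j - l : ℕ) : ℂ))
              * S ((k : ℤ) + 2 * l) m (j - l + 1) z)
        = ∑ l ∈ Finset.range (j + 1),
            (2 * Real.pi * I * (m : ℂ) * (coef k m j l * G (l + 1))
              - ((k : ℂ) + (j : ℂ) + (l : ℂ)) * coef k m j l * G l) := by
          refine Finset.sum_congr rfl fun l hl => ?_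
          have hlj : l ≤ j := by
            have := Finset.mem_range.mp hl; omega
          have ha : ((k : ℤ) + 2 * l + 2) = (k : ℤ) + 2 * ((l + 1 : ℕ) : ℤ) := by
            push_cast; ring
          have hb : j - l = j + 1 - (l + 1) := by omega
          have hc : j - l + 1 = j + 1 - l := by omega
          have hd : ((((k : ℤ) + 2 * l : ℤ) : ℂ) + ((j - l : ℕ) : ℂ))
              = (k : ℂ) + (j : ℂ) + (l : ℂ) := by
            push_cast [Nat.cast_sub hlj]; ring
          rw [ha, hc, hd, hb]
          ring
      _ = (∑ l ∈ Finset.range (j + 1), 2 * Real.pi * I * (m : ℂ) * (coef k m j l * G (l + 1)))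
          - ∑ l ∈ Finset.range (j + 1),
              ((k : ℂ) + (j : ℂ) + (l : ℂ)) * coef k m j l * G l :=
        Finset.sum_sub_distrib _ _
      _ = (∑ l ∈ Finset.range (j + 1), 2 * Real.pi * I * (m : ℂ) * (coef k m j l * G (l + 1)))
          - (∑ l ∈ Finset.range (j + 1),
              ((k : ℂ) + (j : ℂ) + ((l : ℂ) + 1)) * coef k m j (l + 1) * G (l + 1)
            + ((k : ℂ) + (j : ℂ) + ((0 : ℕ) : ℂ)) * coef k m j 0 * G 0) := by rw [hg]
      _ = (∑ l ∈ Finset.range (j + 1),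
            (2 * Real.pi * I * (m : ℂ) * (coef k m j l * G (l + 1))
              - ((k : ℂ) + (j : ℂ) + ((l : ℂ) + 1)) * coef k m j (l + 1) * G (l + 1)))
          + (-((k : ℂ) + (j : ℂ)) * coef k m j 0) * G 0 := by
          rw [Finset.sum_sub_distrib]
          push_cast
          ring
      _ = (∑ l ∈ Finset.range (j + 1), coef k m (j + 1) (l + 1) * G (l + 1))
          + coef k m (j + 1) 0 * G 0 := by
          rw [coef_rec_zero k m j (by omega)]
          refine congrArg (· + _) (Finset.sum_congr rfl fun l hl => ?_)
          have hlj : l ≤ j := by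
            have := Finset.mem_range.mp hl; omega
          rw [coef_rec k m j l (by omega) hlj]
          push_cast
          ring
      _ = ∑ l ∈ Finset.range (j + 1 + 1), coef k m (j + 1) l * G l :=
        (Finset.sum_range_succ' (fun l => coef k m (j + 1) l * G l) (j + 1)).symm

end Stmt10
/-- derivative formulas for Eisenstein and Poincaré series in terms of the
series `Q_k(z,l;m)`. -/
theorem statement10 (k : ℕ) (hk : 4 ≤ k) (hke : Even k) :
    (∀ j : ℕ, ∀ z : ℂ, 0 < z.im →
      iteratedDeriv j (poincare (k : ℤ) 0) z =
        (-1 : ℂ) ^ j * ((Nat.factorial (k + j - 1) : ℂ) / (Nat.factorial (k - 1) : ℂ)) *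
          Qser (k : ℤ) j 0 z) ∧
    (∀ j m : ℕ, 1 ≤ m → ∀ z : ℂ, 0 < z.im →
      iteratedDeriv j (poincare (k : ℤ) m) z =
        ∑ l ∈ Finset.range (j + 1), (-1 : ℂ) ^ (l + j) * (2 * Real.pi * I * (m : ℂ)) ^ l *
          ((Nat.factorial j : ℂ) / (Nat.factorial l : ℂ)) *
          (Nat.choose (k + j - 1) (k + l - 1) : ℂ) * Qser ((k : ℤ) + 2 * l) (j - l) m z) := by
  constructor
  · intro j z hz
    rw [Stmt10.master k hk hke 0 j z hz]
    rw [Finset.sum_eq_single_of_mem 0 (Finset.mem_range.mpr (by omega)) ?side]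
    case side =>
      intro b hb hb0
      have h0 : (2 * Real.pi * I * (((0 : ℕ) : ℂ))) = 0 := by simp
      simp [Stmt10.coef, h0, zero_pow hb0]
    rw [show (k : ℤ) + 2 * ((0 : ℕ) : ℤ) = (k : ℤ) by push_cast; ring, Nat.sub_zero]
    have hc : ((Nat.factorial j : ℂ)) * (Nat.choose (k + j - 1) (k - 1) : ℂ)
        = (Nat.factorial (k + j - 1) : ℂ) / (Nat.factorial (k - 1) : ℂ) := by
      have hN := Nat.choose_mul_factorial_mul_factorial (show k - 1 ≤ k + j - 1 by omega)
      rw [show k + j - 1 - (k - 1) = j by omega] at hN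
      rw [eq_div_iff (Stmt10.factorial_cast_ne_zero (k - 1))]
      exact_mod_cast (by linarith [hN] :
        Nat.factorial j * ((k + j - 1).choose (k - 1)) * Nat.factorial (k - 1)
          = Nat.factorial (k + j - 1))
    unfold Stmt10.coef
    rw [show k + 0 - 1 = k - 1 by omega]
    rw [show (0 : ℕ) + j = j by omega]
    simp only [pow_zero, mul_one, Nat.factorial_zero, Nat.cast_one, div_one]
    linear_combination ((-1 : ℂ) ^ j) * Qser (k : ℤ) j 0 z * hc
  · intro j m _hm z hz
    rw [Stmt10.master k hk hke m j z hz]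
    refine Finset.sum_congr rfl fun l hl => ?_
    unfold Stmt10.coef
    ring
end
end

section
/- Let k₁, k₂ ≥ 4 be even and n ≥ 1 an integer. If g₁ ∈ M_{k₁}(SL(2,ℤ)) and g₂ ∈ M_{k₂}(SL(2,ℤ)), then the Rankin–Cohen bracket [g₁, g₂]_n is a cusp form of weight k₁ + k₂ + 2n for SL(2,ℤ). -/
noncomputable section

open Complex Filter MeasureTheory

namespace RC14

open Finset Metric

lemma isOpen_UH : IsOpen {z : ℂ | 0 < z.im} := isOpen_lt continuous_const Complex.continuous_im

lemma detZ (γ : SL2Z) : γ 0 0 * γ 1 1 - γ 0 1 * γ 1 0 = 1 := by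
  have := γ.property
  rw [Matrix.det_fin_two] at this
  simpa using this

lemma detZC (γ : SL2Z) :
    ((γ 0 0 : ℤ) : ℂ) * ((γ 1 1 : ℤ) : ℂ) - ((γ 0 1 : ℤ) : ℂ) * ((γ 1 0 : ℤ) : ℂ) = 1 := by
  exact_mod_cast congrArg (fun m : ℤ => (m : ℂ)) (detZ γ)

lemma jZ_ne_zero (γ : SL2Z) {z : ℂ} (hz : 0 < z.im) : jZ γ z ≠ 0 := by
  intro h
  rcases eq_or_ne (γ 1 0) 0 with hc | hc
  · have hd : (γ 1 1 : ℤ) ≠ 0 := by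
      intro h'
      have := detZ γ
      rw [hc, h'] at this
      simp at this
    rw [jZ, hc] at h
    simp only [Int.cast_zero, zero_mul, zero_add] at h
    exact hd (by exact_mod_cast h)
  · have him : (jZ γ z).im = 0 := by rw [h]; simp
    rw [jZ] at him
    simp only [Complex.add_im, Complex.mul_im, Complex.intCast_im, Complex.intCast_re,
      add_zero, zero_mul, mul_zero] at him
    have : ((γ 1 0 : ℤ) : ℝ) ≠ 0 := by exact_mod_cast hc
    exact mul_ne_zero this hz.ne' him
    
lemma im_actZ (γ : SL2Z) (z : ℂ) : (actZ γ z).im = z.im / Complex.normSq (jZ γ z) := by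
  have hdet : ((γ 0 0 : ℤ) : ℝ) * ((γ 1 1 : ℤ) : ℝ) - ((γ 0 1 : ℤ) : ℝ) * ((γ 1 0 : ℤ) : ℝ) = 1 := by
    exact_mod_cast congrArg (fun m : ℤ => (m : ℝ)) (detZ γ)
  have h1 : ((((γ 0 0 : ℤ) : ℂ)) * z + ((γ 0 1 : ℤ) : ℂ)).im * (jZ γ z).re
      - ((((γ 0 0 : ℤ) : ℂ)) * z + ((γ 0 1 : ℤ) : ℂ)).re * (jZ γ z).im = z.im := by
    simp only [jZ, Complex.add_im, Complex.add_re, Complex.mul_im, Complex.mul_re,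
      Complex.intCast_im, Complex.intCast_re, zero_mul, mul_zero, add_zero, sub_zero, zero_add]
    linear_combination z.im * hdet
  rw [actZ, Complex.div_im, div_sub_div_same, h1]

lemma im_actZ_pos (γ : SL2Z) {z : ℂ} (hz : 0 < z.im) : 0 < (actZ γ z).im := by
  rw [im_actZ]
  exact div_pos hz (Complex.normSq_pos.2 (jZ_ne_zero γ hz))

lemma hasDerivAt_jZ (γ : SL2Z) (z : ℂ) : HasDerivAt (jZ γ) ((γ 1 0 : ℤ) : ℂ) z := by
  have h := ((hasDerivAt_id z).const_mul (((γ 1 0 : ℤ) : ℂ))).add_const (((γ 1 1 : ℤ) : ℂ))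
  rw [mul_one] at h
  exact h

lemma hasDerivAt_actZ (γ : SL2Z) {z : ℂ} (hz : 0 < z.im) :
    HasDerivAt (actZ γ) ((jZ γ z ^ 2)⁻¹) z := by
  have hj := jZ_ne_zero γ hz
  have h1 : HasDerivAt (fun w => ((γ 0 0 : ℤ) : ℂ) * w + ((γ 0 1 : ℤ) : ℂ)) ((γ 0 0 : ℤ) : ℂ) z := by
    simpa using ((hasDerivAt_id z).const_mul (((γ 0 0 : ℤ) : ℂ))).add_const (((γ 0 1 : ℤ) : ℂ))
  have h2 := (h1.div (hasDerivAt_jZ γ z) hj)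
  have : (((γ 0 0 : ℤ) : ℂ) * jZ γ z - (((γ 0 0 : ℤ) : ℂ) * z + ((γ 0 1 : ℤ) : ℂ)) * ((γ 1 0 : ℤ) : ℂ))
      / jZ γ z ^ 2 = (jZ γ z ^ 2)⁻¹ := by
    rw [div_eq_inv_mul]
    have : ((γ 0 0 : ℤ) : ℂ) * jZ γ z - (((γ 0 0 : ℤ) : ℂ) * z + ((γ 0 1 : ℤ) : ℂ)) * ((γ 1 0 : ℤ) : ℂ) = 1 := by
      rw [jZ]; linear_combination detZC γ
    rw [this, mul_one]
  rw [← this]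
  exact h2

lemma analyticOnNhd_iteratedDeriv {f : ℂ → ℂ} (hf : DifferentiableOn ℂ f {z : ℂ | 0 < z.im}) (r : ℕ) :
    AnalyticOnNhd ℂ (iteratedDeriv r f) {z : ℂ | 0 < z.im} := by
  induction r with
  | zero => simpa [iteratedDeriv_zero] using hf.analyticOnNhd isOpen_UH
  | succ r ih => rw [iteratedDeriv_succ]; exact ih.deriv


/-- The coefficient in the derivative transformation formula. -/
def D (k r t : ℕ) : ℕ := r.choose t * (k + t).ascFactorial (r - t)

lemma Drec (k r t : ℕ) (h : t ≤ r) :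
    D k (r+1) (t+1) = D k r (t+1) * (k+r+t+1) + D k r t := by
  rcases eq_or_lt_of_le h with rfl | hlt
  · simp [D, Nat.choose_succ_self, Nat.choose_self]
  · obtain ⟨s, rfl⟩ : ∃ s, r = t + s + 1 := ⟨r - t - 1, by omega⟩
    unfold D
    rw [show t + s + 1 + 1 - (t + 1) = s + 1 from by omega,
        show t + s + 1 - (t + 1) = s from by omega,
        show t + s + 1 - t = s + 1 from by omega]
    rw [Nat.ascFactorial_succ, Nat.ascFactorial_succ]
    have h1 : (k + t) * (k + t + 1).ascFactorial s = (k + t + s) * (k + t).ascFactorial s :=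
      Nat.succ_ascFactorial (k + t) s
    have h2 : (t + s + 1 + 1).choose (t + 1) = (t + s + 1).choose t + (t + s + 1).choose (t + 1) :=
      Nat.choose_succ_succ _ _
    have h3 : (t + s + 1).choose (t + 1) * (t + 1) = (t + s + 1).choose t * (t + s + 1 - t) :=
      Nat.choose_succ_right_eq _ _
    rw [show t + s + 1 - t = s + 1 from by omega] at h3
    rw [← h1, h2]
    calc ((t+s+1).choose t + (t+s+1).choose (t+1)) * ((k+t+1+s) * (k+t+1).ascFactorial s)
        = (t+s+1).choose t * ((k+t) * (k+t+1).ascFactorial s) +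
            ((t+s+1).choose t * (s+1)) * (k+t+1).ascFactorial s +
            (t+s+1).choose (t+1) * ((k+t+1+s) * (k+t+1).ascFactorial s) := by ring
      _ = (t+s+1).choose t * ((k+t) * (k+t+1).ascFactorial s) +
            ((t+s+1).choose (t+1) * (t+1)) * (k+t+1).ascFactorial s +
            (t+s+1).choose (t+1) * ((k+t+1+s) * (k+t+1).ascFactorial s) := by rw [h3]
      _ = (t+s+1).choose (t+1) * (k+t+1).ascFactorial s * (k+(t+s+1)+t+1) +
            (t+s+1).choose t * ((k+t) * (k+t+1).ascFactorial s) := by ring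

lemma Wzero (k₁ k₂ n t u r : ℕ) (hr : r ≤ n) (h : ¬ (t ≤ r ∧ r + u ≤ n)) :
    (k₁+n-1).choose (n-r) * (k₂+n-1).choose r * D k₁ r t * D k₂ (n-r) u = 0 := by
  rcases Nat.lt_or_ge r t with hlt | hge
  · have : r.choose t = 0 := Nat.choose_eq_zero_of_lt hlt
    simp [D, this]
  · have : n - r < u := by omega
    have : (n-r).choose u = 0 := Nat.choose_eq_zero_of_lt this
    simp [D, this]

lemma Wfact (k₁ k₂ n t u r : ℕ) (hk₁ : 1 ≤ k₁) (hk₂ : 1 ≤ k₂) (htr : t ≤ r) (hru : r + u ≤ n) :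
    ((k₁+n-1).choose (n-r) * (k₂+n-1).choose r * D k₁ r t * D k₂ (n-r) u) *
      (t.factorial * u.factorial * (k₁+t-1).factorial * (k₂+u-1).factorial * (n-t-u).factorial)
    = ((k₁+n-1).factorial * (k₂+n-1).factorial) * (n-t-u).choose (r-t) := by
  have hpos : 0 < (r-t).factorial * (n-r-u).factorial :=
    Nat.mul_pos (Nat.factorial_pos _) (Nat.factorial_pos _)
  apply Nat.eq_of_mul_eq_mul_right hpos
  have a1 : (k₁+t-1).factorial * (k₁+t).ascFactorial (r-t) = (k₁+r-1).factorial := by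
    have := Nat.factorial_mul_ascFactorial' (k₁+t) (r-t) (by omega)
    rwa [show k₁+t+(r-t)-1 = k₁+r-1 from by omega] at this
  have a2 : (k₂+u-1).factorial * (k₂+u).ascFactorial (n-r-u) = (k₂+n-r-1).factorial := by
    have := Nat.factorial_mul_ascFactorial' (k₂+u) (n-r-u) (by omega)
    rwa [show k₂+u+(n-r-u)-1 = k₂+n-r-1 from by omega] at this
  have a3 : r.choose t * t.factorial * (r-t).factorial = r.factorial :=
    Nat.choose_mul_factorial_mul_factorial htr
  have a4 : (n-r).choose u * u.factorial * (n-r-u).factorial = (n-r).factorial :=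
    Nat.choose_mul_factorial_mul_factorial (by omega)
  have a5 : (n-t-u).choose (r-t) * (r-t).factorial * (n-r-u).factorial = (n-t-u).factorial := by
    have := Nat.choose_mul_factorial_mul_factorial (show r-t ≤ n-t-u from by omega)
    rwa [show n-t-u-(r-t) = n-r-u from by omega] at this
  have a6 : (k₁+n-1).choose (n-r) * (n-r).factorial * (k₁+r-1).factorial = (k₁+n-1).factorial := by
    have := Nat.choose_mul_factorial_mul_factorial (show n-r ≤ k₁+n-1 from by omega)
    rwa [show k₁+n-1-(n-r) = k₁+r-1 from by omega] at this
  have a7 : (k₂+n-1).choose r * r.factorial * (k₂+n-r-1).factorial = (k₂+n-1).factorial := by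
    have := Nat.choose_mul_factorial_mul_factorial (show r ≤ k₂+n-1 from by omega)
    rwa [show k₂+n-1-r = k₂+n-r-1 from by omega] at this
  unfold D
  calc ((k₁+n-1).choose (n-r) * (k₂+n-1).choose r * (r.choose t * (k₁+t).ascFactorial (r-t)) *
        ((n-r).choose u * (k₂+u).ascFactorial (n-r-u))) *
      (t.factorial * u.factorial * (k₁+t-1).factorial * (k₂+u-1).factorial * (n-t-u).factorial) *
      ((r-t).factorial * (n-r-u).factorial)
      = ((k₁+n-1).choose (n-r) * ((n-r).choose u * u.factorial * (n-r-u).factorial) *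
          ((k₁+t-1).factorial * (k₁+t).ascFactorial (r-t))) *
        ((k₂+n-1).choose r * (r.choose t * t.factorial * (r-t).factorial) *
          ((k₂+u-1).factorial * (k₂+u).ascFactorial (n-r-u))) * (n-t-u).factorial := by ring
    _ = ((k₁+n-1).choose (n-r) * (n-r).factorial * (k₁+r-1).factorial) *
        ((k₂+n-1).choose r * r.factorial * (k₂+n-r-1).factorial) * (n-t-u).factorial := by
        rw [a1, a2, a3, a4]
    _ = (k₁+n-1).factorial * (k₂+n-1).factorial * (n-t-u).factorial := by rw [a6, a7]
    _ = (k₁+n-1).factorial * (k₂+n-1).factorial *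
        ((n-t-u).choose (r-t) * (r-t).factorial * (n-r-u).factorial) := by rw [a5]
    _ = (k₁+n-1).factorial * (k₂+n-1).factorial * (n-t-u).choose (r-t) *
        ((r-t).factorial * (n-r-u).factorial) := by ring


lemma alt_sum_ind (n t u : ℕ) (h : t + u ≤ n) :
    ∑ r ∈ Finset.range (n+1), (-1:ℂ)^r *
      ((if t ≤ r ∧ r + u ≤ n then (n-t-u).choose (r-t) else 0 : ℕ) : ℂ)
    = (-1:ℂ)^t * (if n-t-u = 0 then 1 else 0) := by
  have hsub : Finset.Ico t (n-u+1) ⊆ Finset.range (n+1) := by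
    intro r hr
    simp only [Finset.mem_Ico, Finset.mem_range] at *
    omega
  have h0 : ∀ r ∈ Finset.range (n+1), r ∉ Finset.Ico t (n-u+1) →
      (-1:ℂ)^r * ((if t ≤ r ∧ r + u ≤ n then (n-t-u).choose (r-t) else 0 : ℕ) : ℂ) = 0 := by
    intro r h1 h2
    simp only [Finset.mem_range] at h1
    simp only [Finset.mem_Ico, not_and, not_lt] at h2
    rw [if_neg (by omega)]
    simp
  rw [← Finset.sum_subset hsub h0, Finset.sum_Ico_eq_sum_range,
    show n - u + 1 - t = (n-t-u) + 1 from by omega]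
  have hcongr : ∀ i ∈ Finset.range (n-t-u+1),
      (-1:ℂ)^(t+i) * ((if t ≤ t+i ∧ t+i+u ≤ n then (n-t-u).choose (t+i-t) else 0 : ℕ):ℂ)
      = (-1:ℂ)^t * ((-1:ℂ)^i * ((n-t-u).choose i : ℂ)) := by
    intro i hi
    simp only [Finset.mem_range] at hi
    rw [if_pos ⟨Nat.le_add_right _ _, by omega⟩, show t+i-t = i from by omega, pow_add,
      mul_assoc]
  rw [Finset.sum_congr rfl hcongr, ← Finset.mul_sum]
  congr 1
  have hInt := Int.alternating_sum_range_choose (n := n-t-u)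
  calc (∑ i ∈ Finset.range (n-t-u+1), (-1:ℂ)^i * ((n-t-u).choose i : ℂ))
      = ((∑ i ∈ Finset.range (n-t-u+1), (-1:ℤ)^i * ((n-t-u).choose i) : ℤ) : ℂ) := by
        push_cast; rfl
    _ = _ := by rw [hInt]; split_ifs <;> simp

lemma Wsum (k₁ k₂ n t u : ℕ) (hk₁ : 1 ≤ k₁) (hk₂ : 1 ≤ k₂) (ht : t ≤ n) (hu : u ≤ n) :
    ∑ r ∈ Finset.range (n+1), (-1:ℂ)^r *
      (((k₁+n-1).choose (n-r) * (k₂+n-1).choose r * D k₁ r t * D k₂ (n-r) u : ℕ) : ℂ)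
    = if t + u = n then (-1:ℂ)^t * (((k₁+n-1).choose u * (k₂+n-1).choose t : ℕ) : ℂ) else 0 := by
  rcases Nat.lt_or_ge n (t+u) with hgt | hle
  · rw [if_neg (by omega)]
    apply Finset.sum_eq_zero
    intro r hr
    simp only [Finset.mem_range] at hr
    rw [Wzero k₁ k₂ n t u r (by omega) (by omega)]
    simp
  · have hc₀pos : 0 < t.factorial * u.factorial * (k₁+t-1).factorial * (k₂+u-1).factorial *
        (n-t-u).factorial := by positivity
    have hc₀ne : ((t.factorial * u.factorial * (k₁+t-1).factorial * (k₂+u-1).factorial *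
        (n-t-u).factorial : ℕ) : ℂ) ≠ 0 := Nat.cast_ne_zero.2 hc₀pos.ne'
    apply mul_right_cancel₀ hc₀ne
    rw [Finset.sum_mul]
    have key : ∀ r ∈ Finset.range (n+1),
        (-1:ℂ)^r * (((k₁+n-1).choose (n-r) * (k₂+n-1).choose r * D k₁ r t * D k₂ (n-r) u : ℕ) : ℂ) *
          ((t.factorial * u.factorial * (k₁+t-1).factorial * (k₂+u-1).factorial *
            (n-t-u).factorial : ℕ) : ℂ)
        = (((k₁+n-1).factorial * (k₂+n-1).factorial : ℕ) : ℂ) *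
          ((-1:ℂ)^r * ((if t ≤ r ∧ r + u ≤ n then (n-t-u).choose (r-t) else 0 : ℕ) : ℂ)) := by
      intro r hr
      simp only [Finset.mem_range] at hr
      by_cases hcase : t ≤ r ∧ r + u ≤ n
      · rw [if_pos hcase, mul_assoc, ← Nat.cast_mul,
          Wfact k₁ k₂ n t u r hk₁ hk₂ hcase.1 hcase.2]
        push_cast
        ring
      · rw [if_neg hcase, Wzero k₁ k₂ n t u r (by omega) hcase]
        simp
    rw [Finset.sum_congr rfl key, ← Finset.mul_sum, alt_sum_ind n t u hle]
    by_cases hn : t + u = n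
    · rw [if_pos hn, if_pos (show n-t-u = 0 from by omega)]
      have e1 : (k₁+n-1).choose u * (u.factorial * (k₁+t-1).factorial) = (k₁+n-1).factorial := by
        have h := Nat.choose_mul_factorial_mul_factorial (show u ≤ k₁+n-1 from by omega)
        rw [show k₁+n-1-u = k₁+t-1 from by omega] at h
        rw [← mul_assoc]; exact h
      have e2 : (k₂+n-1).choose t * (t.factorial * (k₂+u-1).factorial) = (k₂+n-1).factorial := by
        have h := Nat.choose_mul_factorial_mul_factorial (show t ≤ k₂+n-1 from by omega)
        rw [show k₂+n-1-t = k₂+u-1 from by omega] at h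
        rw [← mul_assoc]; exact h
      have e3 : ((k₁+n-1).choose u * (k₂+n-1).choose t) *
          (t.factorial * u.factorial * (k₁+t-1).factorial * (k₂+u-1).factorial *
            (n-t-u).factorial)
          = (k₁+n-1).factorial * (k₂+n-1).factorial := by
        rw [show n-t-u = 0 from by omega]
        calc ((k₁+n-1).choose u * (k₂+n-1).choose t) *
              (t.factorial * u.factorial * (k₁+t-1).factorial * (k₂+u-1).factorial *
                Nat.factorial 0)
            = ((k₁+n-1).choose u * (u.factorial * (k₁+t-1).factorial)) *
              ((k₂+n-1).choose t * (t.factorial * (k₂+u-1).factorial)) := by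
              simp [Nat.factorial]; ring
          _ = _ := by rw [e1, e2]
      rw [← e3]
      push_cast
      ring
    · rw [if_neg hn, if_neg (show ¬ n-t-u = 0 from by omega)]
      simp


lemma iteratedDeriv_transform (γ : SL2Z) (k : ℕ) (hk : 1 ≤ k) {f : ℂ → ℂ}
    (hf : DifferentiableOn ℂ f {z : ℂ | 0 < z.im})
    (htr : ∀ z : ℂ, 0 < z.im → f (actZ γ z) = jZ γ z ^ k * f z) (r : ℕ) :
    ∀ z : ℂ, 0 < z.im → iteratedDeriv r f (actZ γ z) =
      ∑ t ∈ Finset.range (r + 1), ((D k r t : ℕ) : ℂ) * ((γ 1 0 : ℤ) : ℂ) ^ (r - t) *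
        (jZ γ z ^ (k + r + t) * iteratedDeriv t f z) := by
  induction r with
  | zero =>
    intro z hz
    simpa [D, iteratedDeriv_zero] using htr z hz
  | succ r ih =>
    intro z hz
    have hj := jZ_ne_zero γ hz
    have hz' := im_actZ_pos γ hz
    have hF1 : HasDerivAt (iteratedDeriv r f) (iteratedDeriv (r+1) f (actZ γ z)) (actZ γ z) := by
      have h := ((analyticOnNhd_iteratedDeriv hf r) (actZ γ z) hz').differentiableAt.hasDerivAt
      rwa [← iteratedDeriv_succ] at h
    have hL : HasDerivAt (fun w => iteratedDeriv r f (actZ γ w))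
        (iteratedDeriv (r+1) f (actZ γ z) * (jZ γ z ^ 2)⁻¹) z :=
      hF1.comp z (hasDerivAt_actZ γ hz)
    have hR : HasDerivAt (fun w => ∑ t ∈ Finset.range (r + 1),
        ((D k r t : ℕ) : ℂ) * ((γ 1 0 : ℤ) : ℂ) ^ (r - t) *
          (jZ γ w ^ (k + r + t) * iteratedDeriv t f w))
        (∑ t ∈ Finset.range (r + 1), ((D k r t : ℕ) : ℂ) * ((γ 1 0 : ℤ) : ℂ) ^ (r - t) *
          (((k+r+t : ℕ) : ℂ) * jZ γ z ^ (k + r + t - 1) * ((γ 1 0 : ℤ) : ℂ) * iteratedDeriv t f z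
           + jZ γ z ^ (k + r + t) * iteratedDeriv (t+1) f z)) z := by
      apply HasDerivAt.fun_sum
      intro t _
      have hjp : HasDerivAt (fun w => jZ γ w ^ (k+r+t))
          (((k+r+t : ℕ) : ℂ) * jZ γ z ^ (k + r + t - 1) * ((γ 1 0 : ℤ) : ℂ)) z :=
        (hasDerivAt_jZ γ z).pow (k+r+t)
      have hft : HasDerivAt (iteratedDeriv t f) (iteratedDeriv (t+1) f z) z := by
        have h := ((analyticOnNhd_iteratedDeriv hf t) z hz).differentiableAt.hasDerivAt
        rwa [← iteratedDeriv_succ] at h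
      exact (hjp.mul hft).const_mul (((D k r t : ℕ) : ℂ) * ((γ 1 0 : ℤ) : ℂ) ^ (r - t))
    have hEq : deriv (fun w => iteratedDeriv r f (actZ γ w)) z
        = deriv (fun w => ∑ t ∈ Finset.range (r + 1),
            ((D k r t : ℕ) : ℂ) * ((γ 1 0 : ℤ) : ℂ) ^ (r - t) *
              (jZ γ w ^ (k + r + t) * iteratedDeriv t f w)) z := by
      apply Filter.EventuallyEq.deriv_eq
      filter_upwards [isOpen_UH.mem_nhds hz] with w hw
      exact ih w hw
    have hmain : iteratedDeriv (r+1) f (actZ γ z) * (jZ γ z ^ 2)⁻¹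
        = ∑ t ∈ Finset.range (r + 1), ((D k r t : ℕ) : ℂ) * ((γ 1 0 : ℤ) : ℂ) ^ (r - t) *
          (((k+r+t : ℕ) : ℂ) * jZ γ z ^ (k + r + t - 1) * ((γ 1 0 : ℤ) : ℂ) * iteratedDeriv t f z
           + jZ γ z ^ (k + r + t) * iteratedDeriv (t+1) f z) := by
      rw [← hL.deriv, hEq, hR.deriv]
    have hj2 : (jZ γ z ^ 2) ≠ 0 := pow_ne_zero _ hj
    have hmain2 : iteratedDeriv (r+1) f (actZ γ z)
        = (∑ t ∈ Finset.range (r + 1), ((D k r t : ℕ) : ℂ) * ((γ 1 0 : ℤ) : ℂ) ^ (r - t) *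
          (((k+r+t : ℕ) : ℂ) * jZ γ z ^ (k + r + t - 1) * ((γ 1 0 : ℤ) : ℂ) * iteratedDeriv t f z
           + jZ γ z ^ (k + r + t) * iteratedDeriv (t+1) f z)) * jZ γ z ^ 2 := by
      rw [← hmain, mul_assoc, inv_mul_cancel₀ hj2, mul_one]
    rw [hmain2, Finset.sum_mul]
    -- expand each term after multiplying by jZ^2
    have hexp : ∀ t ∈ Finset.range (r + 1),
        ((D k r t : ℕ) : ℂ) * ((γ 1 0 : ℤ) : ℂ) ^ (r - t) *
          (((k+r+t : ℕ) : ℂ) * jZ γ z ^ (k + r + t - 1) * ((γ 1 0 : ℤ) : ℂ) * iteratedDeriv t f z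
           + jZ γ z ^ (k + r + t) * iteratedDeriv (t+1) f z) * jZ γ z ^ 2
        = ((D k r t : ℕ) : ℂ) * ((k+r+t : ℕ) : ℂ) * ((γ 1 0 : ℤ) : ℂ) ^ (r - t) *
            ((γ 1 0 : ℤ) : ℂ) * (jZ γ z ^ (k + r + t + 1) * iteratedDeriv t f z)
          + ((D k r t : ℕ) : ℂ) * ((γ 1 0 : ℤ) : ℂ) ^ (r - t) *
            (jZ γ z ^ (k + r + t + 2) * iteratedDeriv (t+1) f z) := by
      intro t _
      have hpow : jZ γ z ^ (k + r + t - 1) * jZ γ z ^ 2 = jZ γ z ^ (k + r + t + 1) := by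
        rw [← pow_add]
        congr 1
        omega
      linear_combination (((D k r t : ℕ) : ℂ) * ((k+r+t : ℕ) : ℂ) * ((γ 1 0 : ℤ) : ℂ) ^ (r - t) *
        ((γ 1 0 : ℤ) : ℂ) * iteratedDeriv t f z) * hpow
    rw [Finset.sum_congr rfl hexp, Finset.sum_add_distrib]
    rw [Finset.sum_range_succ' (fun t => ((D k (r+1) t : ℕ) : ℂ) * ((γ 1 0 : ℤ) : ℂ) ^ (r + 1 - t) *
      (jZ γ z ^ (k + (r+1) + t) * iteratedDeriv t f z)) (r+1)]
    rw [Finset.sum_range_succ' (fun t => ((D k r t : ℕ) : ℂ) * ((k+r+t : ℕ) : ℂ) *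
      ((γ 1 0 : ℤ) : ℂ) ^ (r - t) * ((γ 1 0 : ℤ) : ℂ) *
      (jZ γ z ^ (k + r + t + 1) * iteratedDeriv t f z)) r]
    have hzero : ((D k r (r+1) : ℕ) : ℂ) * ((k+r+(r+1) : ℕ) : ℂ) *
        ((γ 1 0 : ℤ) : ℂ) ^ (r - (r+1)) * ((γ 1 0 : ℤ) : ℂ) *
        (jZ γ z ^ (k + r + (r+1) + 1) * iteratedDeriv (r+1) f z) = 0 := by
      have : D k r (r+1) = 0 := by
        unfold D
        rw [Nat.choose_succ_self]
        ring
      rw [this]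
      simp
    have hshift : ∑ t ∈ Finset.range r, ((D k r (t+1) : ℕ) : ℂ) * ((k+r+(t+1) : ℕ) : ℂ) *
          ((γ 1 0 : ℤ) : ℂ) ^ (r - (t+1)) * ((γ 1 0 : ℤ) : ℂ) *
          (jZ γ z ^ (k + r + (t+1) + 1) * iteratedDeriv (t+1) f z)
        = ∑ t ∈ Finset.range (r+1), ((D k r (t+1) : ℕ) : ℂ) * ((k+r+(t+1) : ℕ) : ℂ) *
          ((γ 1 0 : ℤ) : ℂ) ^ (r - (t+1)) * ((γ 1 0 : ℤ) : ℂ) *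
          (jZ γ z ^ (k + r + (t+1) + 1) * iteratedDeriv (t+1) f z) := by
      rw [Finset.sum_range_succ, hzero, add_zero]
    rw [hshift]
    have hbase : ((D k (r+1) 0 : ℕ) : ℂ) * ((γ 1 0 : ℤ) : ℂ) ^ (r + 1 - 0) *
        (jZ γ z ^ (k + (r+1) + 0) * iteratedDeriv 0 f z)
        = ((D k r 0 : ℕ) : ℂ) * ((k+r+0 : ℕ) : ℂ) * ((γ 1 0 : ℤ) : ℂ) ^ (r - 0) *
          ((γ 1 0 : ℤ) : ℂ) * (jZ γ z ^ (k + r + 0 + 1) * iteratedDeriv 0 f z) := by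
      have hD : D k (r+1) 0 = D k r 0 * (k+r+0) := by
        unfold D
        simp only [Nat.choose_zero_right, one_mul, Nat.sub_zero, Nat.add_zero]
        rw [Nat.ascFactorial_succ]
        ring
      rw [hD]
      have hc : ((γ 1 0 : ℤ) : ℂ) ^ (r + 1 - 0) = ((γ 1 0 : ℤ) : ℂ) ^ (r - 0) *
          ((γ 1 0 : ℤ) : ℂ) := by
        rw [← pow_succ]
        exact congrArg (fun m => ((γ 1 0 : ℤ) : ℂ) ^ m) (by omega)
      have hj3 : jZ γ z ^ (k + (r + 1) + 0) = jZ γ z ^ (k + r + 0 + 1) :=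
        congrArg (fun m => jZ γ z ^ m) (by omega)
      rw [hc, hj3]
      push_cast
      ring
    have hstep : ∀ t ∈ Finset.range (r+1),
        ((D k (r+1) (t+1) : ℕ) : ℂ) * ((γ 1 0 : ℤ) : ℂ) ^ (r + 1 - (t+1)) *
          (jZ γ z ^ (k + (r+1) + (t+1)) * iteratedDeriv (t+1) f z)
        = ((D k r (t+1) : ℕ) : ℂ) * ((k+r+(t+1) : ℕ) : ℂ) *
            ((γ 1 0 : ℤ) : ℂ) ^ (r - (t+1)) * ((γ 1 0 : ℤ) : ℂ) *
            (jZ γ z ^ (k + r + (t+1) + 1) * iteratedDeriv (t+1) f z)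
          + ((D k r t : ℕ) : ℂ) * ((γ 1 0 : ℤ) : ℂ) ^ (r - t) *
            (jZ γ z ^ (k + r + t + 2) * iteratedDeriv (t+1) f z) := by
      intro t htmem
      simp only [Finset.mem_range] at htmem
      have htr' : t ≤ r := by omega
      have hDrec := Drec k r t htr'
      have hjpow : jZ γ z ^ (k + (r+1) + (t+1)) = jZ γ z ^ (k + r + t + 2) := by
        congr 1
        omega
      have hjpow2 : jZ γ z ^ (k + r + (t+1) + 1) = jZ γ z ^ (k + r + t + 2) :=
        congrArg (fun m => jZ γ z ^ m) (by omega)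
      rw [hjpow, hjpow2, show r + 1 - (t+1) = r - t from by omega]
      rcases eq_or_lt_of_le htr' with rfl | hlt
      · have hD0 : D k t (t+1) = 0 := by
          unfold D
          rw [Nat.choose_succ_self]
          ring
        rw [hDrec, hD0]
        push_cast
        ring
      · have hcpow : ((γ 1 0 : ℤ) : ℂ) ^ (r - (t+1)) * ((γ 1 0 : ℤ) : ℂ)
            = ((γ 1 0 : ℤ) : ℂ) ^ (r - t) := by
          rw [← pow_succ]
          congr 1
          omega
        rw [hDrec]
        push_cast
        linear_combination (-(((D k r (t+1) : ℕ) : ℂ) * ((k : ℂ) + (r : ℂ) + (t : ℂ) + 1) *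
          (jZ γ z ^ (k + r + t + 2) * iteratedDeriv (t+1) f z))) * hcpow
    rw [Finset.sum_congr rfl hstep, Finset.sum_add_distrib]
    rw [hbase]
    ring


lemma RC_transform (γ : SL2Z) (k₁ k₂ n : ℕ) (hk₁ : 1 ≤ k₁) (hk₂ : 1 ≤ k₂) {g₁ g₂ : ℂ → ℂ}
    (hd₁ : DifferentiableOn ℂ g₁ {z : ℂ | 0 < z.im})
    (hd₂ : DifferentiableOn ℂ g₂ {z : ℂ | 0 < z.im})
    (htr₁ : ∀ z : ℂ, 0 < z.im → g₁ (actZ γ z) = jZ γ z ^ k₁ * g₁ z)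
    (htr₂ : ∀ z : ℂ, 0 < z.im → g₂ (actZ γ z) = jZ γ z ^ k₂ * g₂ z)
    (z : ℂ) (hz : 0 < z.im) :
    RC k₁ k₂ n g₁ g₂ (actZ γ z) = jZ γ z ^ (k₁ + k₂ + 2*n) * RC k₁ k₂ n g₁ g₂ z := by
  have E1 : ∀ r, r ≤ n → iteratedDeriv r g₁ (actZ γ z)
      = ∑ t ∈ Finset.range (n+1), ((D k₁ r t : ℕ) : ℂ) * ((γ 1 0 : ℤ) : ℂ) ^ (r - t) *
          (jZ γ z ^ (k₁ + r + t) * iteratedDeriv t g₁ z) := by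
    intro r hr
    rw [iteratedDeriv_transform γ k₁ hk₁ hd₁ htr₁ r z hz]
    apply Finset.sum_subset (Finset.range_subset_range.2 (by omega))
    intro t _ htn
    simp only [Finset.mem_range, not_lt] at htn
    have h0 : r.choose t = 0 := Nat.choose_eq_zero_of_lt (by omega)
    simp [D, h0]
  have E2 : ∀ r, r ≤ n → iteratedDeriv (n-r) g₂ (actZ γ z)
      = ∑ u ∈ Finset.range (n+1), ((D k₂ (n-r) u : ℕ) : ℂ) * ((γ 1 0 : ℤ) : ℂ) ^ (n - r - u) *
          (jZ γ z ^ (k₂ + (n-r) + u) * iteratedDeriv u g₂ z) := by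
    intro r hr
    rw [iteratedDeriv_transform γ k₂ hk₂ hd₂ htr₂ (n-r) z hz]
    apply Finset.sum_subset (Finset.range_subset_range.2 (by omega))
    intro u _ hun
    simp only [Finset.mem_range, not_lt] at hun
    have h0 : (n-r).choose u = 0 := Nat.choose_eq_zero_of_lt (by omega)
    simp [D, h0]
  have main : ∀ r ∈ Finset.range (n+1),
      (-1:ℂ)^r * ((k₁+n-1).choose (n-r) : ℂ) * ((k₂+n-1).choose r : ℂ) *
        iteratedDeriv r g₁ (actZ γ z) * iteratedDeriv (n-r) g₂ (actZ γ z)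
      = ∑ t ∈ Finset.range (n+1), ∑ u ∈ Finset.range (n+1),
          ((-1:ℂ)^r * (((k₁+n-1).choose (n-r) * (k₂+n-1).choose r * D k₁ r t *
            D k₂ (n-r) u : ℕ) : ℂ)) *
            (((γ 1 0 : ℤ) : ℂ) ^ (n - t - u) *
              (jZ γ z ^ (k₁ + k₂ + n + t + u) * (iteratedDeriv t g₁ z * iteratedDeriv u g₂ z))) := by
    intro r hrm
    simp only [Finset.mem_range] at hrm
    have hr : r ≤ n := by omega
    rw [E1 r hr, E2 r hr, mul_assoc, Finset.sum_mul_sum]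
    simp only [Finset.mul_sum]
    refine Finset.sum_congr rfl fun t htm => Finset.sum_congr rfl fun u hum => ?_
    simp only [Finset.mem_range] at htm hum
    by_cases hcase : t ≤ r ∧ r + u ≤ n
    · have hpow1 : ((γ 1 0 : ℤ) : ℂ) ^ (r - t) * ((γ 1 0 : ℤ) : ℂ) ^ (n - r - u)
          = ((γ 1 0 : ℤ) : ℂ) ^ (n - t - u) := by
        rw [← pow_add]
        exact congrArg (fun m => ((γ 1 0 : ℤ) : ℂ) ^ m) (by omega)
      have hpow2 : jZ γ z ^ (k₁ + r + t) * jZ γ z ^ (k₂ + (n-r) + u)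
          = jZ γ z ^ (k₁ + k₂ + n + t + u) := by
        rw [← pow_add]
        exact congrArg (fun m => jZ γ z ^ m) (by omega)
      rw [← hpow1, ← hpow2]
      push_cast
      ring
    · have hW := Wzero k₁ k₂ n t u r hr hcase
      rw [hW]
      rcases Nat.lt_or_ge r t with hlt | hge
      · have h0 : D k₁ r t = 0 := by
          unfold D
          rw [Nat.choose_eq_zero_of_lt hlt]
          ring
        rw [h0]
        push_cast
        ring
      · have h0 : D k₂ (n-r) u = 0 := by
          unfold D
          rw [Nat.choose_eq_zero_of_lt (show n - r < u from by omega)]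
          ring
        rw [h0]
        push_cast
        ring
  unfold RC
  rw [Finset.sum_congr rfl main, Finset.sum_comm]
  have swap2 : ∀ t ∈ Finset.range (n+1),
      (∑ r ∈ Finset.range (n+1), ∑ u ∈ Finset.range (n+1),
        ((-1:ℂ)^r * (((k₁+n-1).choose (n-r) * (k₂+n-1).choose r * D k₁ r t *
          D k₂ (n-r) u : ℕ) : ℂ)) *
          (((γ 1 0 : ℤ) : ℂ) ^ (n - t - u) *
            (jZ γ z ^ (k₁ + k₂ + n + t + u) * (iteratedDeriv t g₁ z * iteratedDeriv u g₂ z))))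
      = ∑ u ∈ Finset.range (n+1),
          (∑ r ∈ Finset.range (n+1), (-1:ℂ)^r * (((k₁+n-1).choose (n-r) * (k₂+n-1).choose r *
            D k₁ r t * D k₂ (n-r) u : ℕ) : ℂ)) *
          (((γ 1 0 : ℤ) : ℂ) ^ (n - t - u) *
            (jZ γ z ^ (k₁ + k₂ + n + t + u) * (iteratedDeriv t g₁ z * iteratedDeriv u g₂ z))) := by
    intro t _
    rw [Finset.sum_comm]
    exact Finset.sum_congr rfl fun u _ => (Finset.sum_mul _ _ _).symm
  rw [Finset.sum_congr rfl swap2]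
  have inner : ∀ t ∈ Finset.range (n+1),
      (∑ u ∈ Finset.range (n+1),
        (∑ r ∈ Finset.range (n+1), (-1:ℂ)^r * (((k₁+n-1).choose (n-r) * (k₂+n-1).choose r *
          D k₁ r t * D k₂ (n-r) u : ℕ) : ℂ)) *
        (((γ 1 0 : ℤ) : ℂ) ^ (n - t - u) *
          (jZ γ z ^ (k₁ + k₂ + n + t + u) * (iteratedDeriv t g₁ z * iteratedDeriv u g₂ z))))
      = jZ γ z ^ (k₁ + k₂ + 2*n) *
          ((-1:ℂ)^t * ((k₁+n-1).choose (n-t) : ℂ) * ((k₂+n-1).choose t : ℂ) *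
            iteratedDeriv t g₁ z * iteratedDeriv (n-t) g₂ z) := by
    intro t htm
    simp only [Finset.mem_range] at htm
    have ht : t ≤ n := by omega
    have hcong : ∀ u ∈ Finset.range (n+1),
        (∑ r ∈ Finset.range (n+1), (-1:ℂ)^r * (((k₁+n-1).choose (n-r) * (k₂+n-1).choose r *
          D k₁ r t * D k₂ (n-r) u : ℕ) : ℂ)) *
        (((γ 1 0 : ℤ) : ℂ) ^ (n - t - u) *
          (jZ γ z ^ (k₁ + k₂ + n + t + u) * (iteratedDeriv t g₁ z * iteratedDeriv u g₂ z)))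
        = (if t + u = n then (-1:ℂ)^t * (((k₁+n-1).choose u * (k₂+n-1).choose t : ℕ) : ℂ) else 0) *
        (((γ 1 0 : ℤ) : ℂ) ^ (n - t - u) *
          (jZ γ z ^ (k₁ + k₂ + n + t + u) * (iteratedDeriv t g₁ z * iteratedDeriv u g₂ z))) := by
      intro u hum
      simp only [Finset.mem_range] at hum
      rw [Wsum k₁ k₂ n t u hk₁ hk₂ ht (by omega)]
    rw [Finset.sum_congr rfl hcong]
    rw [Finset.sum_eq_single_of_mem (n-t) (Finset.mem_range.2 (by omega))]
    · rw [if_pos (by omega), show n - t - (n-t) = 0 from by omega, pow_zero,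
        show k₁ + k₂ + n + t + (n-t) = k₁ + k₂ + 2*n from by omega]
      push_cast
      ring
    · intro u _ hune
      rw [if_neg (by omega), zero_mul]
  rw [Finset.sum_congr rfl inner, ← Finset.mul_sum]


lemma deriv_bound {f : ℂ → ℂ} (hf : DifferentiableOn ℂ f {z : ℂ | 0 < z.im})
    {C A : ℝ} (hA : 0 < A) (hb : ∀ z : ℂ, A ≤ z.im → ‖f z‖ ≤ C) :
    ∀ z : ℂ, A + 1 ≤ z.im → ‖deriv f z‖ ≤ C / (z.im - A) := by
  intro z hz
  have hR : 0 < z.im - A := by linarith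
  have hball : Metric.closedBall z (z.im - A) ⊆ {w : ℂ | A ≤ w.im} := by
    intro w hw
    simp only [Metric.mem_closedBall] at hw
    have him : |w.im - z.im| ≤ z.im - A := by
      calc |w.im - z.im| = |(w - z).im| := by rw [Complex.sub_im]
        _ ≤ ‖w - z‖ := Complex.abs_im_le_norm _
        _ ≤ z.im - A := by rwa [Complex.dist_eq] at hw
    have h1 := (abs_le.1 him).1
    simp only [Set.mem_setOf_eq]
    linarith
  have hsub : Metric.closedBall z (z.im - A) ⊆ {w : ℂ | 0 < w.im} :=
    fun w hw => lt_of_lt_of_le hA (hball hw)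
  have hd : DiffContOnCl ℂ f (Metric.ball z (z.im - A)) :=
    DifferentiableOn.diffContOnCl_ball hf hsub
  exact Complex.norm_deriv_le_of_forall_mem_sphere_norm_le hR hd
    (fun w hw => hb w (hball (Metric.sphere_subset_closedBall hw)))

lemma bounded_iteratedDeriv {f : ℂ → ℂ} (hf : DifferentiableOn ℂ f {z : ℂ | 0 < z.im})
    {C A : ℝ} (hb : ∀ z : ℂ, A ≤ z.im → ‖f z‖ ≤ C) (r : ℕ) :
    ∃ C' A' : ℝ, 0 < A' ∧ 0 ≤ C' ∧ ∀ z : ℂ, A' ≤ z.im → ‖iteratedDeriv r f z‖ ≤ C' := by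
  induction r with
  | zero =>
    refine ⟨max C 0, max A 1, lt_of_lt_of_le one_pos (le_max_right _ _), le_max_right _ _,
      fun z hz => ?_⟩
    rw [iteratedDeriv_zero]
    exact le_trans (hb z (le_trans (le_max_left _ _) hz)) (le_max_left _ _)
  | succ r ih =>
    obtain ⟨C', A', hA', hC', hbd⟩ := ih
    refine ⟨C', A' + 1, by linarith, hC', fun z hz => ?_⟩
    rw [iteratedDeriv_succ]
    have hdiff : DifferentiableOn ℂ (iteratedDeriv r f) {z : ℂ | 0 < z.im} :=
      (analyticOnNhd_iteratedDeriv hf r).differentiableOn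
    calc ‖deriv (iteratedDeriv r f) z‖ ≤ C' / (z.im - A') := deriv_bound hdiff hA' hbd z hz
      _ ≤ C' := by
        apply div_le_self hC'
        linarith

lemma tendsto_iteratedDeriv {f : ℂ → ℂ} (hf : DifferentiableOn ℂ f {z : ℂ | 0 < z.im})
    {C A : ℝ} (hb : ∀ z : ℂ, A ≤ z.im → ‖f z‖ ≤ C) (r : ℕ) (hr : 1 ≤ r) :
    Filter.Tendsto (iteratedDeriv r f) (Filter.comap Complex.im Filter.atTop) (nhds 0) := by
  obtain ⟨r, rfl⟩ : ∃ s, r = s + 1 := ⟨r - 1, by omega⟩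
  obtain ⟨C', A', hA', hC', hbd⟩ := bounded_iteratedDeriv hf hb r
  rw [iteratedDeriv_succ]
  have hdiff : DifferentiableOn ℂ (iteratedDeriv r f) {z : ℂ | 0 < z.im} :=
    (analyticOnNhd_iteratedDeriv hf r).differentiableOn
  have hbnd := deriv_bound hdiff hA' hbd
  apply squeeze_zero_norm' (a := fun z : ℂ => C' / (z.im - A'))
  · have hmem : {z : ℂ | A' + 1 ≤ z.im} ∈ Filter.comap Complex.im Filter.atTop :=
      Filter.preimage_mem_comap (Filter.Ici_mem_atTop (A' + 1))
    filter_upwards [hmem] with z hz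
    exact hbnd z hz
  · have h1 : Filter.Tendsto (fun z : ℂ => z.im) (Filter.comap Complex.im Filter.atTop)
        Filter.atTop := Filter.tendsto_comap
    have h2 : Filter.Tendsto (fun y : ℝ => C' / (y - A')) Filter.atTop (nhds 0) :=
      Filter.Tendsto.div_atTop tendsto_const_nhds
        (Filter.tendsto_atTop_add_const_right _ (-A') Filter.tendsto_id)
    exact h2.comp h1

lemma ev_bounded_iteratedDeriv {f : ℂ → ℂ} (hf : DifferentiableOn ℂ f {z : ℂ | 0 < z.im})
    {C A : ℝ} (hb : ∀ z : ℂ, A ≤ z.im → ‖f z‖ ≤ C) (r : ℕ) :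
    Filter.IsBoundedUnder (· ≤ ·) (Filter.comap Complex.im Filter.atTop)
      ((‖·‖) ∘ (iteratedDeriv r f)) := by
  obtain ⟨C', A', hA', hC', hbd⟩ := bounded_iteratedDeriv hf hb r
  refine ⟨C', ?_⟩
  rw [Filter.eventually_map]
  have hmem : {z : ℂ | A' ≤ z.im} ∈ Filter.comap Complex.im Filter.atTop :=
    Filter.preimage_mem_comap (Filter.Ici_mem_atTop A')
  filter_upwards [hmem] with z hz
  exact hbd z hz

lemma RC_tendsto (k₁ k₂ n : ℕ) (hn : 1 ≤ n) {g₁ g₂ : ℂ → ℂ}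
    (hd₁ : DifferentiableOn ℂ g₁ {z : ℂ | 0 < z.im})
    (hd₂ : DifferentiableOn ℂ g₂ {z : ℂ | 0 < z.im})
    {C₁ A₁ C₂ A₂ : ℝ} (hb₁ : ∀ z : ℂ, A₁ ≤ z.im → ‖g₁ z‖ ≤ C₁)
    (hb₂ : ∀ z : ℂ, A₂ ≤ z.im → ‖g₂ z‖ ≤ C₂) :
    Filter.Tendsto (RC k₁ k₂ n g₁ g₂) (Filter.comap Complex.im Filter.atTop) (nhds 0) := by
  have key : ∀ r ∈ Finset.range (n+1), Filter.Tendsto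
      (fun z => (-1:ℂ)^r * ((k₁+n-1).choose (n-r) : ℂ) * ((k₂+n-1).choose r : ℂ) *
        iteratedDeriv r g₁ z * iteratedDeriv (n-r) g₂ z)
      (Filter.comap Complex.im Filter.atTop) (nhds 0) := by
    intro r hrm
    simp only [Finset.mem_range] at hrm
    rcases Nat.eq_zero_or_pos r with rfl | hrpos
    · -- r = 0, n - 0 = n ≥ 1 : second factor tends to zero
      have h1 : Filter.Tendsto (iteratedDeriv (n-0) g₂) (Filter.comap Complex.im Filter.atTop)
          (nhds 0) := tendsto_iteratedDeriv hd₂ hb₂ (n-0) (by omega)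
      have h2 := ev_bounded_iteratedDeriv hd₁ hb₁ 0
      have h3 := h1.zero_mul_isBoundedUnder_le h2
      have h4 := h3.const_mul ((-1:ℂ)^0 * ((k₁+n-1).choose (n-0) : ℂ) * ((k₂+n-1).choose 0 : ℂ))
      rw [mul_zero] at h4
      apply h4.congr
      intro z
      ring
    · have h1 : Filter.Tendsto (iteratedDeriv r g₁) (Filter.comap Complex.im Filter.atTop)
          (nhds 0) := tendsto_iteratedDeriv hd₁ hb₁ r (by omega)
      have h2 := ev_bounded_iteratedDeriv hd₂ hb₂ (n-r)
      have h3 := h1.zero_mul_isBoundedUnder_le h2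
      have h4 := h3.const_mul ((-1:ℂ)^r * ((k₁+n-1).choose (n-r) : ℂ) * ((k₂+n-1).choose r : ℂ))
      rw [mul_zero] at h4
      apply h4.congr
      intro z
      ring
  have := tendsto_finset_sum (Finset.range (n+1)) key
  rw [Finset.sum_const_zero] at this
  exact this

lemma RC_diff (k₁ k₂ n : ℕ) {g₁ g₂ : ℂ → ℂ}
    (hd₁ : DifferentiableOn ℂ g₁ {z : ℂ | 0 < z.im})
    (hd₂ : DifferentiableOn ℂ g₂ {z : ℂ | 0 < z.im}) :
    DifferentiableOn ℂ (RC k₁ k₂ n g₁ g₂) {z : ℂ | 0 < z.im} := by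
  apply DifferentiableOn.fun_sum
  intro r _
  have h1 := (analyticOnNhd_iteratedDeriv hd₁ r).differentiableOn
  have h2 := (analyticOnNhd_iteratedDeriv hd₂ (n-r)).differentiableOn
  exact (h1.const_mul _).mul h2

end RC14






/-- the Rankin–Cohen bracket of two modular forms of weights `k₁, k₂` is a
cusp form of weight `k₁+k₂+2n` for `n ≥ 1`. -/
theorem statement14 (k₁ k₂ : ℕ) (h₁ : 4 ≤ k₁) (h₂ : 4 ≤ k₂) (he₁ : Even k₁) (he₂ : Even k₂)
    (n : ℕ) (hn : 1 ≤ n) (g₁ g₂ : ℂ → ℂ)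
    (hg₁ : IsModularForm (k₁ : ℤ) g₁) (hg₂ : IsModularForm (k₂ : ℤ) g₂) :
    IsCuspForm ((k₁ : ℤ) + k₂ + 2 * n) (RC k₁ k₂ n g₁ g₂) := by
  obtain ⟨hd₁, htr₁, C₁, A₁, hb₁⟩ := hg₁
  obtain ⟨hd₂, htr₂, C₂, A₂, hb₂⟩ := hg₂
  have hk₁' : 1 ≤ k₁ := by omega
  have hk₂' : 1 ≤ k₂ := by omega
  refine ⟨RC14.RC_diff k₁ k₂ n hd₁ hd₂, ?_, RC14.RC_tendsto k₁ k₂ n hn hd₁ hd₂ hb₁ hb₂⟩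
  intro γ z hz
  have htr₁' : ∀ w : ℂ, 0 < w.im → g₁ (actZ γ w) = jZ γ w ^ k₁ * g₁ w := by
    intro w hw
    have h := htr₁ γ w hw
    rwa [zpow_natCast] at h
  have htr₂' : ∀ w : ℂ, 0 < w.im → g₂ (actZ γ w) = jZ γ w ^ k₂ * g₂ w := by
    intro w hw
    have h := htr₂ γ w hw
    rwa [zpow_natCast] at h
  have h := RC14.RC_transform γ k₁ k₂ n hk₁' hk₂' hd₁ hd₂ htr₁' htr₂' z hz
  have hp : (jZ γ z) ^ ((k₁ : ℤ) + k₂ + 2 * n) = (jZ γ z) ^ (k₁ + k₂ + 2 * n) := by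
    rw [show ((k₁ : ℤ) + k₂ + 2 * n) = ((k₁ + k₂ + 2 * n : ℕ) : ℤ) from by push_cast; ring,
      zpow_natCast]
  rw [h, hp]
end
end

section
/- Let k₁, k₂ ≥ 3 be integers, let m₁, m₂ ∈ ℤ≥0, and let w ∈ ℂ with Re(w) < k₁−1 and Re(w) < k₂−1. Then the double Poincaré series P_{k₁,k₂}(z,w;m₁,m₂) converges absolutely, uniformly on compacta, and as a function of z is a holomorphic cusp form of weight k₁+k₂ for SL(2,ℤ). -/
noncomputable section

open Complex Filter MeasureTheory

namespace S15

/-! ### Row action of `SL2Z` on pairs -/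

def rmul (p : ℤ × ℤ) (γ : SL2Z) : ℤ × ℤ :=
  (p.1 * γ 0 0 + p.2 * γ 1 0, p.1 * γ 0 1 + p.2 * γ 1 1)

lemma det_g (γ : SL2Z) : γ 0 0 * γ 1 1 - γ 0 1 * γ 1 0 = 1 := by
  have := γ.2; rwa [Matrix.det_fin_two] at this

lemma rmul_rmul (p : ℤ × ℤ) (γ δ : SL2Z) : rmul (rmul p γ) δ = rmul p (γ * δ) := by
  simp only [rmul, Matrix.SpecialLinearGroup.coe_mul, Matrix.mul_apply, Fin.sum_univ_two]
  exact Prod.ext (by ring) (by ring)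

lemma rmul_one (p : ℤ × ℤ) : rmul p 1 = p := by
  simp [rmul, Matrix.SpecialLinearGroup.coe_one]

lemma isCoprime_rmul {p : ℤ × ℤ} (h : IsCoprime p.1 p.2) (γ : SL2Z) :
    IsCoprime (rmul p γ).1 (rmul p γ).2 := by
  obtain ⟨A, B, hAB⟩ := h
  refine ⟨A * γ 1 1 - B * γ 0 1, -A * γ 1 0 + B * γ 0 0, ?_⟩
  have hd := det_g γ
  simp only [rmul]
  linear_combination (A * p.1 + B * p.2) * hd + hAB

lemma crossP_rmul (p q : ℤ × ℤ) (γ : SL2Z) : crossP (rmul p γ) (rmul q γ) = crossP p q := by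
  have hd := det_g γ
  simp only [crossP, rmul]
  linear_combination (p.1 * q.2 - p.2 * q.1) * hd

/-- The induced equivalence of `CP`. -/
def cpEquiv (γ : SL2Z) : CP ≃ CP where
  toFun p := ⟨rmul p.1 γ, isCoprime_rmul p.2 γ⟩
  invFun p := ⟨rmul p.1 γ⁻¹, isCoprime_rmul p.2 γ⁻¹⟩
  left_inv p := by apply Subtype.ext; simp [rmul_rmul, rmul_one]
  right_inv p := by apply Subtype.ext; simp [rmul_rmul, rmul_one]

/-! ### Basic nonvanishing and imaginary parts -/

lemma jP_ne_zero {p : ℤ × ℤ} (hp : p ≠ 0) {z : ℂ} (hz : 0 < z.im) : jP p z ≠ 0 := by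
  intro h
  rcases eq_or_ne p.1 0 with h1 | h1
  · have h2 : p.2 ≠ 0 := fun h2 => hp (Prod.ext h1 h2)
    rw [jP, h1] at h
    simp only [Int.cast_zero, zero_mul, zero_add] at h
    exact_mod_cast h2 (by exact_mod_cast h)
  · have : (jP p z).im = p.1 * z.im := by simp [jP]
    rw [h] at this
    have : (p.1 : ℝ) * z.im = 0 := by simpa using this.symm
    rcases mul_eq_zero.mp this with h' | h'
    · exact h1 (by exact_mod_cast h')
    · exact hz.ne' h'

lemma ne_zero_of_isCoprime {p : ℤ × ℤ} (h : IsCoprime p.1 p.2) : p ≠ 0 := by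
  rintro rfl
  exact not_isCoprime_zero_zero h

/-- Imaginary part of a fractional transformation with determinant 1. -/
lemma im_frac (a b c d : ℝ) (hdet : a * d - b * c = 1) (z : ℂ) (h : (c : ℂ) * z + d ≠ 0) :
    (((a : ℂ) * z + b) / ((c : ℂ) * z + d)).im = z.im / normSq ((c : ℂ) * z + d) := by
  rw [Complex.div_im]
  have h1 : ((a : ℂ) * z + b).im = a * z.im := by simp
  have h2 : ((a : ℂ) * z + b).re = a * z.re + b := by simp
  have h3 : ((c : ℂ) * z + d).im = c * z.im := by simp
  have h4 : ((c : ℂ) * z + d).re = c * z.re + d := by simp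
  rw [h1, h2, h3, h4]
  have hn : normSq ((c : ℂ) * z + d) ≠ 0 := (Complex.normSq_pos.mpr h).ne'
  field_simp
  linear_combination z.im * hdet

lemma im_mobiusP (p : ℤ × ℤ) (h : IsCoprime p.1 p.2) {z : ℂ} (hz : 0 < z.im) :
    (mobiusP p h z).im = z.im / normSq (jP p z) := by
  have hspec : h.choose * p.1 + h.choose_spec.choose * p.2 = 1 := h.choose_spec.choose_spec
  have hspecR : (h.choose : ℝ) * p.1 + h.choose_spec.choose * p.2 = 1 := by exact_mod_cast hspec
  have := im_frac (h.choose_spec.choose : ℝ) (-(h.choose : ℝ)) (p.1 : ℝ) (p.2 : ℝ)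
    (by linarith) z
    (by rw [show ((p.1:ℝ):ℂ) = ((p.1:ℤ):ℂ) by push_cast; ring,
          show ((p.2:ℝ):ℂ) = ((p.2:ℤ):ℂ) by push_cast; ring];
        exact jP_ne_zero (ne_zero_of_isCoprime h) hz)
  rw [mobiusP, jP]
  rw [show ((h.choose_spec.choose : ℂ) * z - (h.choose : ℂ))
      = (((h.choose_spec.choose:ℝ)):ℂ) * z + ((-(h.choose:ℝ)):ℂ) by push_cast; ring]
  rw [show ((p.1:ℤ):ℂ) * z + ((p.2:ℤ):ℂ) = (((p.1:ℝ)):ℂ) * z + (((p.2:ℝ)):ℂ) by push_cast; ring]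
  exact_mod_cast this

lemma im_mobiusP_pos (p : ℤ × ℤ) (h : IsCoprime p.1 p.2) {z : ℂ} (hz : 0 < z.im) :
    0 < (mobiusP p h z).im := by
  rw [im_mobiusP p h hz]
  have := jP_ne_zero (ne_zero_of_isCoprime h) hz
  exact div_pos hz (Complex.normSq_pos.mpr this)

lemma jZ_ne_zero (γ : SL2Z) {z : ℂ} (hz : 0 < z.im) : jZ γ z ≠ 0 := by
  have hcop : IsCoprime (γ 1 0, γ 1 1).1 (γ 1 0, γ 1 1).2 :=
    ⟨-(γ 0 1), γ 0 0, by simp only; linear_combination det_g γ⟩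
  exact jP_ne_zero (ne_zero_of_isCoprime hcop) hz

lemma im_actZ (γ : SL2Z) {z : ℂ} (hz : 0 < z.im) :
    (actZ γ z).im = z.im / normSq (jZ γ z) := by
  have hd : (γ 0 0 : ℝ) * (γ 1 1 : ℝ) - (γ 0 1 : ℝ) * (γ 1 0 : ℝ) = 1 := by
    exact_mod_cast det_g γ
  have := im_frac (γ 0 0 : ℝ) (γ 0 1 : ℝ) (γ 1 0 : ℝ) (γ 1 1 : ℝ) hd z
    (by push_cast; exact_mod_cast jZ_ne_zero γ hz)
  rw [actZ, jZ]
  exact_mod_cast this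

lemma im_actZ_pos (γ : SL2Z) {z : ℂ} (hz : 0 < z.im) : 0 < (actZ γ z).im := by
  rw [im_actZ γ hz]
  exact div_pos hz (Complex.normSq_pos.mpr (jZ_ne_zero γ hz))

/-! ### Bezout representatives of the Möbius action -/

lemma bezout_diff {p : ℤ × ℤ} (A B A' B' : ℤ) (h : A * p.1 + B * p.2 = 1)
    (h' : A' * p.1 + B' * p.2 = 1) : ∃ n : ℤ, B - B' = n * p.1 ∧ A' - A = n * p.2 := by
  have hrel : (A - A') * p.1 + (B - B') * p.2 = 0 := by linarith
  rcases eq_or_ne p.1 0 with h1 | h1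
  · have hcop : IsCoprime p.1 p.2 := ⟨A, B, h⟩
    rw [h1] at hcop
    have hp2 : p.2 * p.2 = 1 := by
      rcases Int.isUnit_iff.mp (isCoprime_zero_left.mp hcop) with h2 | h2 <;> rw [h2] <;> ring
    have hp2ne : p.2 ≠ 0 := by intro h0; rw [h0] at hp2; simp at hp2
    refine ⟨(A' - A) * p.2, ?_, by linear_combination (A - A') * hp2⟩
    have hBB : (B - B') * p.2 = 0 := by linear_combination hrel - (A - A') * h1
    rcases mul_eq_zero.mp hBB with h2 | h2
    · rw [h1]; linarith
    · exact absurd h2 hp2ne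
  · have hdvd : p.1 ∣ (B - B') := by
      have hcop : IsCoprime p.1 p.2 := ⟨A, B, h⟩
      have : p.1 ∣ (B - B') * p.2 := ⟨-(A - A'), by linear_combination hrel⟩
      exact IsCoprime.dvd_of_dvd_mul_right hcop this
    obtain ⟨n, hn⟩ := hdvd
    refine ⟨n, by linarith [hn], ?_⟩
    have h2 : p.1 * (A - A' + n * p.2) = 0 := by linear_combination hrel - p.2 * hn
    rcases mul_eq_zero.mp h2 with hc | hc
    · exact absurd hc h1
    · linarith

lemma mobiusP_eq_rep (p : ℤ × ℤ) (h : IsCoprime p.1 p.2) (A B : ℤ)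
    (hAB : A * p.1 + B * p.2 = 1) {z : ℂ} (hz : 0 < z.im) :
    ∃ n : ℤ, mobiusP p h z = ((B : ℂ) * z - (A : ℂ)) / jP p z + (n : ℂ) := by
  have hspec : h.choose * p.1 + h.choose_spec.choose * p.2 = 1 := h.choose_spec.choose_spec
  obtain ⟨n, hn1, hn2⟩ := bezout_diff h.choose h.choose_spec.choose A B hspec hAB
  have hj : jP p z ≠ 0 := jP_ne_zero (ne_zero_of_isCoprime h) hz
  refine ⟨n, ?_⟩
  have h1 : (h.choose_spec.choose : ℂ) - B = (n : ℂ) * p.1 := by exact_mod_cast hn1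
  have h2 : (A : ℂ) - (h.choose : ℂ) = (n : ℂ) * p.2 := by exact_mod_cast hn2
  have key : (h.choose_spec.choose : ℂ) * z - (h.choose : ℂ)
      = ((B : ℂ) * z - (A : ℂ)) + (n : ℂ) * ((p.1 : ℂ) * z + (p.2 : ℂ)) := by
    linear_combination z * h1 + h2
  rw [mobiusP, key, show ((p.1:ℂ) * z + (p.2:ℂ)) = jP p z from rfl,
    add_div, mul_div_assoc, div_self hj, mul_one]

/-- `j(p·γ, z) = j(p, γz) · j(γ,z)`. -/
lemma jP_rmul (p : ℤ × ℤ) (γ : SL2Z) {z : ℂ} (hz : 0 < z.im) :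
    jP (rmul p γ) z = jP p (actZ γ z) * jZ γ z := by
  have hD : jZ γ z ≠ 0 := jZ_ne_zero γ hz
  have hD' : ((γ 1 0 : ℤ):ℂ) * z + ((γ 1 1 : ℤ):ℂ) ≠ 0 := hD
  simp only [jP, actZ, jZ, rmul]
  push_cast
  field_simp
  ring

/-- Transformation of `mobiusP` under the right action, up to an integer. -/
lemma mobiusP_act (γ : SL2Z) (p : ℤ × ℤ) (h : IsCoprime p.1 p.2)
    (h' : IsCoprime (rmul p γ).1 (rmul p γ).2) {z : ℂ} (hz : 0 < z.im) :
    ∃ n : ℤ, mobiusP (rmul p γ) h' z = mobiusP p h (actZ γ z) + (n : ℂ) := by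
  have hD : jZ γ z ≠ 0 := jZ_ne_zero γ hz
  have hz' : 0 < (actZ γ z).im := im_actZ_pos γ hz
  obtain ⟨A, B, hAB⟩ := id h
  set A'' : ℤ := A * γ 1 1 - B * γ 0 1 with hA''
  set B'' : ℤ := B * γ 0 0 - A * γ 1 0 with hB''
  have hd := det_g γ
  have hAB'' : A'' * (rmul p γ).1 + B'' * (rmul p γ).2 = 1 := by
    simp only [rmul, hA'', hB'']
    linear_combination (A * p.1 + B * p.2) * hd + hAB
  have hrep : ((B : ℂ) * actZ γ z - (A : ℂ)) / jP p (actZ γ z)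
      = ((B'' : ℂ) * z - (A'' : ℂ)) / jP (rmul p γ) z := by
    have hj' : jP p (actZ γ z) ≠ 0 := jP_ne_zero (ne_zero_of_isCoprime h) hz'
    have hnum : ((B : ℂ) * actZ γ z - (A : ℂ)) * jZ γ z = (B'' : ℂ) * z - (A'' : ℂ) := by
      have hD' : ((γ 1 0 : ℤ):ℂ) * z + ((γ 1 1 : ℤ):ℂ) ≠ 0 := hD
      simp only [actZ, jZ]
      push_cast [hA'', hB'']
      rw [sub_mul, mul_assoc, div_mul_cancel₀ _ hD']
      ring
    rw [jP_rmul p γ hz, ← hnum]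
    rw [mul_div_mul_right _ _ hD]
  obtain ⟨n1, hn1⟩ := mobiusP_eq_rep p h A B hAB hz'
  obtain ⟨n2, hn2⟩ := mobiusP_eq_rep (rmul p γ) h' A'' B'' hAB'' hz
  exact ⟨n2 - n1, by rw [hn2, hn1, ← hrep]; push_cast; ring⟩

/-! ### Size estimates -/

/-- The sup norm of an integer pair, as a real number. -/
def N (p : ℤ × ℤ) : ℝ := (max p.1.natAbs p.2.natAbs : ℕ)

lemma N_nonneg (p : ℤ × ℤ) : 0 ≤ N p := Nat.cast_nonneg _

lemma one_le_N {p : ℤ × ℤ} (hp : p ≠ 0) : 1 ≤ N p := by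
  rw [N]
  have : 1 ≤ max p.1.natAbs p.2.natAbs := by
    by_contra hlt
    push_neg at hlt
    interval_cases h : max p.1.natAbs p.2.natAbs
    · simp only [Nat.max_eq_zero_iff, Int.natAbs_eq_zero] at h
      exact hp (Prod.ext h.1 h.2)
  exact_mod_cast this

lemma N_pos {p : ℤ × ℤ} (hp : p ≠ 0) : 0 < N p := lt_of_lt_of_le one_pos (one_le_N hp)

lemma sq_N_le (p : ℤ × ℤ) : N p ^ 2 ≤ (p.1 : ℝ) ^ 2 + (p.2 : ℝ) ^ 2 := by
  have h1 : ((p.1.natAbs : ℝ)) ^ 2 = (p.1 : ℝ) ^ 2 := by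
    rw [show ((p.1.natAbs : ℝ)) = |(p.1 : ℝ)| by simp [Nat.cast_natAbs]]
    exact sq_abs _
  have h2 : ((p.2.natAbs : ℝ)) ^ 2 = (p.2 : ℝ) ^ 2 := by
    rw [show ((p.2.natAbs : ℝ)) = |(p.2 : ℝ)| by simp [Nat.cast_natAbs]]
    exact sq_abs _
  rw [N]
  rcases le_total p.1.natAbs p.2.natAbs with h | h
  · rw [max_eq_right h]
    nlinarith [sq_nonneg (p.1 : ℝ)]
  · rw [max_eq_left h]
    nlinarith [sq_nonneg (p.2 : ℝ)]

lemma summable_N_rpow {e : ℝ} (he : e < -2) :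
    Summable fun p : ℤ × ℤ => N p ^ e := by
  have hk : 2 < -e := by linarith
  have := EisensteinSeries.summable_one_div_norm_rpow hk
  rw [← (finTwoArrowEquiv ℤ).symm.summable_iff] at this
  refine this.congr fun p => ?_
  simp [EisensteinSeries.norm_eq_max_natAbs, finTwoArrowEquiv, N]

/-- The ellipticity constant `ρ(z) = y²/(|z|²+1)`. -/
def rho (z : ℂ) : ℝ := z.im ^ 2 / (normSq z + 1)

lemma rho_pos {z : ℂ} (hz : 0 < z.im) : 0 < rho z := by
  have h1 : (0:ℝ) < normSq z + 1 := by
    have := Complex.normSq_nonneg z; linarith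
  exact div_pos (pow_pos hz 2) h1

lemma continuous_rho : Continuous rho := by
  apply Continuous.div (Complex.continuous_im.pow 2)
    (Complex.continuous_normSq.add continuous_const)
  intro z
  have := Complex.normSq_nonneg z
  intro h0
  simp only [Pi.add_apply] at h0
  linarith

lemma normSq_jP_ge (p : ℤ × ℤ) (z : ℂ) :
    z.im ^ 2 * ((p.1 : ℝ) ^ 2 + (p.2 : ℝ) ^ 2) ≤ normSq (jP p z) * (normSq z + 1) := by
  have h1 : normSq (jP p z) = ((p.1:ℝ) * z.re + (p.2:ℝ)) ^ 2 + ((p.1:ℝ) * z.im) ^ 2 := by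
    rw [Complex.normSq_apply]
    have hre : (jP p z).re = (p.1:ℝ) * z.re + (p.2:ℝ) := by simp [jP]
    have him : (jP p z).im = (p.1:ℝ) * z.im := by simp [jP]
    rw [hre, him]; ring
  have h2 : normSq z = z.re ^ 2 + z.im ^ 2 := by rw [Complex.normSq_apply]; ring
  rw [h1, h2]
  nlinarith [sq_nonneg ((p.1:ℝ) * (z.re^2 + z.im^2) + (p.2:ℝ) * z.re),
    sq_nonneg ((p.1:ℝ) * z.re + (p.2:ℝ))]

lemma sqrt_rho_N_le {p : ℤ × ℤ} (hp : p ≠ 0) {z : ℂ} (hz : 0 < z.im) :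
    Real.sqrt (rho z) * N p ≤ ‖jP p z‖ := by
  have h0 : (0:ℝ) < normSq z + 1 := by
    have := Complex.normSq_nonneg z; linarith
  have key : rho z * N p ^ 2 ≤ normSq (jP p z) := by
    rw [rho, div_mul_eq_mul_div, div_le_iff₀ h0]
    calc z.im ^ 2 * N p ^ 2 ≤ z.im ^ 2 * ((p.1:ℝ)^2 + (p.2:ℝ)^2) := by
          have := sq_N_le p; nlinarith [sq_nonneg z.im]
      _ ≤ normSq (jP p z) * (normSq z + 1) := normSq_jP_ge p z
  have h1 : Real.sqrt (rho z * N p ^ 2) ≤ Real.sqrt (normSq (jP p z)) := Real.sqrt_le_sqrt key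
  rw [Real.sqrt_mul (rho_pos hz).le, Real.sqrt_sq (N_nonneg p)] at h1
  rwa [Complex.norm_def]

/-- Key rpow bound for `|j(p,z)|^e`, `e ≤ 0`. -/
lemma abs_jP_rpow_le {p : ℤ × ℤ} (hp : IsCoprime p.1 p.2) {z : ℂ} (hz : 0 < z.im)
    {e : ℝ} (he : e ≤ 0) {s : ℝ} (hs : 0 < s) (hsle : s ≤ Real.sqrt (rho z)) :
    ‖jP p z‖ ^ e ≤ s ^ e * N p ^ e := by
  have hp0 := ne_zero_of_isCoprime hp
  have hb : 0 < s * N p := mul_pos hs (N_pos hp0)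
  have hle : s * N p ≤ ‖jP p z‖ :=
    le_trans (mul_le_mul_of_nonneg_right hsle (N_nonneg p)) (sqrt_rho_N_le hp0 hz)
  calc ‖jP p z‖ ^ e ≤ (s * N p) ^ e := Real.rpow_le_rpow_of_nonpos hb hle he
    _ = s ^ e * N p ^ e := Real.mul_rpow hs.le (N_nonneg p)

lemma cross_le (p q : ℤ × ℤ) {z : ℂ} (hz : 0 < z.im) :
    (crossP p q : ℝ) ≤ ‖jP p z‖ * ‖jP q z‖ / z.im := by
  rw [le_div_iff₀ hz]
  have him : (jP p z * (starRingEnd ℂ) (jP q z)).im = (crossP p q : ℝ) * z.im := by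
    simp only [jP, crossP, Complex.mul_im, Complex.add_im, Complex.add_re, Complex.mul_re,
      Complex.conj_re, Complex.conj_im, Complex.intCast_re, Complex.intCast_im,
      Complex.ofReal_re, Complex.ofReal_im, map_add, map_mul]
    push_cast
    ring
  calc (crossP p q : ℝ) * z.im = (jP p z * (starRingEnd ℂ) (jP q z)).im := him.symm
    _ ≤ |(jP p z * (starRingEnd ℂ) (jP q z)).im| := le_abs_self _
    _ ≤ ‖jP p z * (starRingEnd ℂ) (jP q z)‖ := Complex.abs_im_le_norm _
    _ = ‖jP p z‖ * ‖jP q z‖ := by rw [norm_mul, Complex.norm_conj]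

end S15

namespace S15

/-! ### The master bound for the double Poincaré term -/

lemma term_bound (k₁ k₂ : ℤ) (w : ℂ) (m₁ m₂ : ℕ) {z : ℂ} (hz : 0 < z.im) (pq : CP × CP) :
    ‖dblPoinTerm k₁ k₂ w m₁ m₂ z pq‖ ≤
      z.im ^ (-(max (w.re - 1) 0)) *
        (‖jP pq.1.1 z‖ ^ (max (w.re - 1) 0 - (k₁:ℝ)) *
          ‖jP pq.2.1 z‖ ^ (max (w.re - 1) 0 - (k₂:ℝ))) := by
  obtain ⟨p, q⟩ := pq
  set A := max (w.re - 1) 0 with hA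
  have hA0 : 0 ≤ A := le_max_right _ _
  have hj1 : jP p.1 z ≠ 0 := jP_ne_zero (ne_zero_of_isCoprime p.2) hz
  have hj2 : jP q.1 z ≠ 0 := jP_ne_zero (ne_zero_of_isCoprime q.2) hz
  have ha1 : 0 < ‖jP p.1 z‖ := norm_pos_iff.mpr hj1
  have ha2 : 0 < ‖jP q.1 z‖ := norm_pos_iff.mpr hj2
  rw [dblPoinTerm]
  split_ifs with hc
  · have hcR : (0:ℝ) < ((crossP p.1 q.1 : ℤ) : ℝ) := by exact_mod_cast hc
    have hc1 : (1:ℝ) ≤ ((crossP p.1 q.1 : ℤ) : ℝ) := by exact_mod_cast hc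
    have e1 : ‖(((crossP p.1 q.1 : ℤ) : ℂ)) ^ (w - 1)‖
        = ((crossP p.1 q.1 : ℤ) : ℝ) ^ (w.re - 1) := by
      rw [show ((crossP p.1 q.1 : ℤ) : ℂ) = (((crossP p.1 q.1 : ℤ):ℝ) : ℂ) by push_cast; ring]
      rw [Complex.norm_cpow_eq_rpow_re_of_pos hcR]
      norm_num
    have him : 0 ≤ ((m₁:ℂ) * mobiusCP p z + (m₂:ℂ) * mobiusCP q z).im := by
      have i1 := im_mobiusP_pos p.1 p.2 hz
      have i2 := im_mobiusP_pos q.1 q.2 hz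
      have hm1 : (0:ℝ) ≤ m₁ := Nat.cast_nonneg _
      have hm2 : (0:ℝ) ≤ m₂ := Nat.cast_nonneg _
      simp only [mobiusCP, Complex.add_im, Complex.mul_im, Complex.natCast_re,
        Complex.natCast_im, zero_mul, add_zero]
      nlinarith [mul_nonneg hm1 i1.le, mul_nonneg hm2 i2.le]
    have e2 : ‖Complex.exp (2 * Real.pi * I *
        ((m₁:ℂ) * mobiusCP p z + (m₂:ℂ) * mobiusCP q z))‖ ≤ 1 := by
      rw [Complex.norm_exp, Real.exp_le_one_iff]
      set ζ := (m₁:ℂ) * mobiusCP p z + (m₂:ℂ) * mobiusCP q z with hζ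
      have hre : (2 * (Real.pi:ℂ) * I * ζ).re = -(2 * Real.pi * ζ.im) := by
        simp [Complex.mul_re, Complex.mul_im]
      rw [hre]
      nlinarith [Real.pi_pos, him]
    have e3 : ‖jP p.1 z ^ (-k₁)‖ = ‖jP p.1 z‖ ^ (-(k₁:ℝ)) := by
      rw [norm_zpow,
        show (-(k₁:ℝ)) = ((-k₁ : ℤ):ℝ) by push_cast; ring, Real.rpow_intCast]
    have e4 : ‖jP q.1 z ^ (-k₂)‖ = ‖jP q.1 z‖ ^ (-(k₂:ℝ)) := by
      rw [norm_zpow,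
        show (-(k₂:ℝ)) = ((-k₂ : ℤ):ℝ) by push_cast; ring, Real.rpow_intCast]
    have hcross_bd : ((crossP p.1 q.1 : ℤ) : ℝ) ^ (w.re - 1)
        ≤ (‖jP p.1 z‖ * ‖jP q.1 z‖ / z.im) ^ A := by
      refine le_trans (Real.rpow_le_rpow_of_exponent_le hc1
        (le_max_left (w.re - 1) 0)) ?_
      exact Real.rpow_le_rpow hcR.le (cross_le p.1 q.1 hz) hA0
    calc ‖(((crossP p.1 q.1 : ℤ) : ℂ)) ^ (w - 1) *
          Complex.exp (2 * Real.pi * I * ((m₁:ℂ) * mobiusCP p z + (m₂:ℂ) * mobiusCP q z)) *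
          jP p.1 z ^ (-k₁) * jP q.1 z ^ (-k₂)‖
        = ((crossP p.1 q.1 : ℤ) : ℝ) ^ (w.re - 1) *
          ‖Complex.exp (2 * Real.pi * I * ((m₁:ℂ) * mobiusCP p z + (m₂:ℂ) * mobiusCP q z))‖ *
          ‖jP p.1 z‖ ^ (-(k₁:ℝ)) * ‖jP q.1 z‖ ^ (-(k₂:ℝ)) := by
          rw [norm_mul, norm_mul, norm_mul, e1, e3, e4]
      _ ≤ (‖jP p.1 z‖ * ‖jP q.1 z‖ / z.im) ^ A * 1 *
          ‖jP p.1 z‖ ^ (-(k₁:ℝ)) * ‖jP q.1 z‖ ^ (-(k₂:ℝ)) := by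
          have hb1 : (0:ℝ) ≤ ((crossP p.1 q.1 : ℤ) : ℝ) ^ (w.re - 1) := Real.rpow_nonneg hcR.le _
          refine mul_le_mul_of_nonneg_right ?_ (Real.rpow_nonneg ha2.le _)
          refine mul_le_mul_of_nonneg_right ?_ (Real.rpow_nonneg ha1.le _)
          exact mul_le_mul hcross_bd e2 (norm_nonneg _) (Real.rpow_nonneg (by positivity) _)
      _ = z.im ^ (-A) * (‖jP p.1 z‖ ^ (A - (k₁:ℝ)) *
            ‖jP q.1 z‖ ^ (A - (k₂:ℝ))) := by
          rw [Real.div_rpow (by positivity) hz.le,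
            Real.mul_rpow ha1.le ha2.le, Real.rpow_neg hz.le, mul_one]
          rw [show ‖jP p.1 z‖ ^ A * ‖jP q.1 z‖ ^ A / z.im ^ A *
                ‖jP p.1 z‖ ^ (-(k₁:ℝ)) * ‖jP q.1 z‖ ^ (-(k₂:ℝ))
              = (z.im ^ A)⁻¹ * ((‖jP p.1 z‖ ^ A * ‖jP p.1 z‖ ^ (-(k₁:ℝ))) *
                (‖jP q.1 z‖ ^ A * ‖jP q.1 z‖ ^ (-(k₂:ℝ)))) by ring]
          rw [← Real.rpow_add ha1, ← Real.rpow_add ha2, ← sub_eq_add_neg, ← sub_eq_add_neg]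
  · rw [norm_zero]
    positivity

/-- Summability of the master bound over `CP × CP`. -/
lemma summable_master {e₁ e₂ : ℝ} (h1 : e₁ < -2) (h2 : e₂ < -2) {z : ℂ} (hz : 0 < z.im) :
    Summable fun pq : CP × CP =>
      ‖jP pq.1.1 z‖ ^ e₁ * ‖jP pq.2.1 z‖ ^ e₂ := by
  set s := Real.sqrt (rho z) with hs
  have hspos : 0 < s := Real.sqrt_pos.mpr (rho_pos hz)
  have key : ∀ e : ℝ, e < -2 → Summable fun p : CP => s ^ e * N p.1 ^ e := by
    intro e he
    exact ((summable_N_rpow he).subtype {p : ℤ × ℤ | IsCoprime p.1 p.2}).mul_left _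
  have hsum := Summable.mul_of_nonneg (key e₁ h1) (key e₂ h2)
    (fun p => mul_nonneg (Real.rpow_nonneg hspos.le _) (Real.rpow_nonneg (N_nonneg _) _))
    (fun p => mul_nonneg (Real.rpow_nonneg hspos.le _) (Real.rpow_nonneg (N_nonneg _) _))
  refine hsum.of_nonneg_of_le (fun pq => by positivity) fun pq => ?_
  have b1 := abs_jP_rpow_le pq.1.2 hz (e := e₁) (by linarith) hspos le_rfl
  have b2 := abs_jP_rpow_le pq.2.2 hz (e := e₂) (by linarith) hspos le_rfl
  calc ‖jP pq.1.1 z‖ ^ e₁ * ‖jP pq.2.1 z‖ ^ e₂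
      ≤ (s ^ e₁ * N pq.1.1 ^ e₁) * (s ^ e₂ * N pq.2.1 ^ e₂) :=
        mul_le_mul b1 b2 (Real.rpow_nonneg (norm_nonneg _) _)
          (mul_nonneg (Real.rpow_nonneg hspos.le _) (Real.rpow_nonneg (N_nonneg _) _))
    _ = _ := rfl

/-- Transformation of `mobiusCP` under `cpEquiv`, up to an integer. -/
lemma mobiusCP_act (γ : SL2Z) (p : CP) {z : ℂ} (hz : 0 < z.im) :
    ∃ n : ℤ, mobiusCP (cpEquiv γ p) z = mobiusCP p (actZ γ z) + (n : ℂ) :=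
  mobiusP_act γ p.1 p.2 (isCoprime_rmul p.2 γ) hz

/-! ### Transformation of the term under the action -/

lemma term_act (k₁ k₂ : ℤ) (w : ℂ) (m₁ m₂ : ℕ) (γ : SL2Z) {z : ℂ} (hz : 0 < z.im)
    (pq : CP × CP) :
    dblPoinTerm k₁ k₂ w m₁ m₂ (actZ γ z) pq
      = jZ γ z ^ (k₁ + k₂) *
        dblPoinTerm k₁ k₂ w m₁ m₂ z (cpEquiv γ pq.1, cpEquiv γ pq.2) := by
  obtain ⟨p, q⟩ := pq
  have hD : jZ γ z ≠ 0 := jZ_ne_zero γ hz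
  have hcross : crossP (cpEquiv γ p).1 (cpEquiv γ q).1 = crossP p.1 q.1 := crossP_rmul p.1 q.1 γ
  rw [dblPoinTerm, dblPoinTerm]
  simp only
  rw [hcross]
  split_ifs with hc
  · obtain ⟨n₁, hn₁⟩ := mobiusCP_act γ p hz
    obtain ⟨n₂, hn₂⟩ := mobiusCP_act γ q hz
    have hexp : Complex.exp (2 * Real.pi * I *
          ((m₁:ℂ) * mobiusCP (cpEquiv γ p) z + (m₂:ℂ) * mobiusCP (cpEquiv γ q) z))
        = Complex.exp (2 * Real.pi * I *
          ((m₁:ℂ) * mobiusCP p (actZ γ z) + (m₂:ℂ) * mobiusCP q (actZ γ z))) := by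
      have : (2 * (Real.pi:ℂ) * I *
            ((m₁:ℂ) * mobiusCP (cpEquiv γ p) z + (m₂:ℂ) * mobiusCP (cpEquiv γ q) z))
          = (2 * (Real.pi:ℂ) * I *
            ((m₁:ℂ) * mobiusCP p (actZ γ z) + (m₂:ℂ) * mobiusCP q (actZ γ z)))
            + (((m₁ : ℤ) * n₁ + (m₂ : ℤ) * n₂ : ℤ):ℂ) * (2 * Real.pi * I) := by
        rw [hn₁, hn₂]
        push_cast
        ring
      rw [this, Complex.exp_add, Complex.exp_int_mul_two_pi_mul_I, mul_one]
    have hj1 : jP (cpEquiv γ p).1 z = jP p.1 (actZ γ z) * jZ γ z := jP_rmul p.1 γ hz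
    have hj2 : jP (cpEquiv γ q).1 z = jP q.1 (actZ γ z) * jZ γ z := jP_rmul q.1 γ hz
    rw [hexp, hj1, hj2, mul_zpow, mul_zpow]
    have hpow : jZ γ z ^ (k₁ + k₂) * (jZ γ z ^ (-k₁) * jZ γ z ^ (-k₂)) = 1 := by
      rw [← zpow_add₀ hD, ← zpow_add₀ hD, show k₁ + k₂ + (-k₁ + -k₂) = 0 by ring, zpow_zero]
    calc ((crossP p.1 q.1 : ℤ):ℂ) ^ (w - 1) *
          Complex.exp (2 * Real.pi * I *
            ((m₁:ℂ) * mobiusCP p (actZ γ z) + (m₂:ℂ) * mobiusCP q (actZ γ z))) *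
          jP p.1 (actZ γ z) ^ (-k₁) * jP q.1 (actZ γ z) ^ (-k₂)
        = (jZ γ z ^ (k₁ + k₂) * (jZ γ z ^ (-k₁) * jZ γ z ^ (-k₂))) *
          (((crossP p.1 q.1 : ℤ):ℂ) ^ (w - 1) *
          Complex.exp (2 * Real.pi * I *
            ((m₁:ℂ) * mobiusCP p (actZ γ z) + (m₂:ℂ) * mobiusCP q (actZ γ z))) *
          jP p.1 (actZ γ z) ^ (-k₁) * jP q.1 (actZ γ z) ^ (-k₂)) := by rw [hpow, one_mul]
      _ = jZ γ z ^ (k₁ + k₂) *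
          (((crossP p.1 q.1 : ℤ):ℂ) ^ (w - 1) *
          Complex.exp (2 * Real.pi * I *
            ((m₁:ℂ) * mobiusCP p (actZ γ z) + (m₂:ℂ) * mobiusCP q (actZ γ z))) *
          (jP p.1 (actZ γ z) ^ (-k₁) * jZ γ z ^ (-k₁)) *
          (jP q.1 (actZ γ z) ^ (-k₂) * jZ γ z ^ (-k₂))) := by ring
  · rw [mul_zero]

/-! ### Differentiability of a single term -/

lemma term_diffOn (k₁ k₂ : ℤ) (w : ℂ) (m₁ m₂ : ℕ) (pq : CP × CP) :
    DifferentiableOn ℂ (fun z => dblPoinTerm k₁ k₂ w m₁ m₂ z pq) {z : ℂ | 0 < z.im} := by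
  by_cases hc : 0 < crossP pq.1.1 pq.2.1
  · intro z hz
    have hz' : (0:ℝ) < z.im := hz
    have hj1 : jP pq.1.1 z ≠ 0 := jP_ne_zero (ne_zero_of_isCoprime pq.1.2) hz'
    have hj2 : jP pq.2.1 z ≠ 0 := jP_ne_zero (ne_zero_of_isCoprime pq.2.2) hz'
    have hjP_diff : ∀ p : ℤ × ℤ, DifferentiableAt ℂ (fun z : ℂ => jP p z) z := by
      intro p
      simp only [jP]
      exact (differentiableAt_id.const_mul _).add_const _
    have hmob : ∀ p : CP, jP p.1 z ≠ 0 → DifferentiableAt ℂ (fun z => mobiusCP p z) z := by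
      intro p hj
      simp only [mobiusCP, mobiusP]
      exact ((differentiableAt_id.const_mul _).sub_const _).div (hjP_diff p.1) hj
    have hzpow : ∀ (p : ℤ × ℤ) (k : ℤ), jP p z ≠ 0 →
        DifferentiableAt ℂ (fun z => jP p z ^ (-k)) z := by
      intro p k hj
      exact DifferentiableAt.zpow (hjP_diff p) (Or.inl hj)
    have : DifferentiableAt ℂ (fun z => dblPoinTerm k₁ k₂ w m₁ m₂ z pq) z := by
      simp only [dblPoinTerm, if_pos hc]
      refine DifferentiableAt.mul (DifferentiableAt.mul (DifferentiableAt.mul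
        (differentiableAt_const _) ?_) (hzpow _ k₁ hj1)) (hzpow _ k₂ hj2)
      refine DifferentiableAt.cexp ?_
      exact DifferentiableAt.const_mul
        (((hmob pq.1 hj1).const_mul _).add ((hmob pq.2 hj2).const_mul _)) _
    exact this.differentiableWithinAt
  · have : (fun z => dblPoinTerm k₁ k₂ w m₁ m₂ z pq) = fun _ => 0 := by
      funext z
      rw [dblPoinTerm, if_neg hc]
    rw [this]
    exact differentiableOn_const 0

end S15

set_option maxHeartbeats 1600000 in
/-- the double Poincaré series `P_{k₁,k₂}(z,w;m₁,m₂)` converges absolutely,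
uniformly on compacta, and is a holomorphic cusp form of weight `k₁+k₂` in `z`. -/
theorem statement15 (k₁ k₂ : ℤ) (h₁ : 3 ≤ k₁) (h₂ : 3 ≤ k₂) (m₁ m₂ : ℕ) (w : ℂ)
    (hw₁ : w.re < (k₁ : ℝ) - 1) (hw₂ : w.re < (k₂ : ℝ) - 1) :
    (∀ z : ℂ, 0 < z.im → Summable fun pq : CP × CP => ‖dblPoinTerm k₁ k₂ w m₁ m₂ z pq‖) ∧
    (∀ K : Set ℂ, K ⊆ {z : ℂ | 0 < z.im} → IsCompact K →
      TendstoUniformlyOn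
        (fun (F : Finset (CP × CP)) (z : ℂ) => ∑ pq ∈ F, dblPoinTerm k₁ k₂ w m₁ m₂ z pq)
        (dblPoin k₁ k₂ w m₁ m₂) atTop K) ∧
    DifferentiableOn ℂ (dblPoin k₁ k₂ w m₁ m₂) {z : ℂ | 0 < z.im} ∧
    (∀ γ : SL2Z, ∀ z : ℂ, 0 < z.im →
      dblPoin k₁ k₂ w m₁ m₂ (actZ γ z) = jZ γ z ^ (k₁ + k₂) * dblPoin k₁ k₂ w m₁ m₂ z) ∧
    Tendsto (dblPoin k₁ k₂ w m₁ m₂) (comap Complex.im atTop) (nhds 0) := by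
  have h₁R : (3:ℝ) ≤ (k₁:ℝ) := by exact_mod_cast h₁
  have h₂R : (3:ℝ) ≤ (k₂:ℝ) := by exact_mod_cast h₂
  set A : ℝ := max (w.re - 1) 0 with hA
  have hA0 : (0:ℝ) ≤ A := le_max_right _ _
  have he₁ : A - (k₁:ℝ) < -2 := by
    rcases max_cases (w.re - 1) 0 with ⟨h, _⟩ | ⟨h, _⟩ <;> rw [hA, h] <;> linarith
  have he₂ : A - (k₂:ℝ) < -2 := by
    rcases max_cases (w.re - 1) 0 with ⟨h, _⟩ | ⟨h, _⟩ <;> rw [hA, h] <;> linarith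
  -- Part 1 : absolute convergence
  have hsum : ∀ z : ℂ, 0 < z.im → Summable fun pq : CP × CP =>
      ‖dblPoinTerm k₁ k₂ w m₁ m₂ z pq‖ := by
    intro z hz
    exact ((S15.summable_master he₁ he₂ hz).mul_left (z.im ^ (-A))).of_nonneg_of_le
      (fun _ => norm_nonneg _) (S15.term_bound k₁ k₂ w m₁ m₂ hz)
  -- Part 2 : uniform convergence on compacts
  have hunif : ∀ K : Set ℂ, K ⊆ {z : ℂ | 0 < z.im} → IsCompact K →
      TendstoUniformlyOn
        (fun (F : Finset (CP × CP)) (z : ℂ) => ∑ pq ∈ F, dblPoinTerm k₁ k₂ w m₁ m₂ z pq)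
        (dblPoin k₁ k₂ w m₁ m₂) atTop K := by
    intro K hK hKc
    rcases K.eq_empty_or_nonempty with rfl | hne
    · exact tendstoUniformlyOn_empty
    obtain ⟨z₁, hz₁K, hz₁⟩ := hKc.exists_isMinOn hne Complex.continuous_im.continuousOn
    obtain ⟨z₂, hz₂K, hz₂⟩ := hKc.exists_isMinOn hne S15.continuous_rho.continuousOn
    have hy₀ : 0 < z₁.im := hK hz₁K
    have hρ : 0 < S15.rho z₂ := S15.rho_pos (hK hz₂K)
    set s₀ := Real.sqrt (S15.rho z₂) with hs₀
    have hs₀pos : 0 < s₀ := Real.sqrt_pos.mpr hρ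
    have hu : Summable (fun pq : CP × CP => z₁.im ^ (-A) *
        ((s₀ ^ (A - (k₁:ℝ)) * S15.N pq.1.1 ^ (A - (k₁:ℝ))) *
         (s₀ ^ (A - (k₂:ℝ)) * S15.N pq.2.1 ^ (A - (k₂:ℝ))))) := by
      refine Summable.mul_left _ ?_
      exact Summable.mul_of_nonneg
        (((S15.summable_N_rpow he₁).subtype _).mul_left _)
        (((S15.summable_N_rpow he₂).subtype _).mul_left _)
        (fun p => mul_nonneg (Real.rpow_nonneg hs₀pos.le _)
          (Real.rpow_nonneg (S15.N_nonneg _) _))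
        (fun p => mul_nonneg (Real.rpow_nonneg hs₀pos.le _)
          (Real.rpow_nonneg (S15.N_nonneg _) _))
    apply tendstoUniformlyOn_tsum hu
    intro pq z hzK
    have hz : 0 < z.im := hK hzK
    refine le_trans (S15.term_bound k₁ k₂ w m₁ m₂ hz pq) ?_
    have hb1 : ‖jP pq.1.1 z‖ ^ (A - (k₁:ℝ))
        ≤ s₀ ^ (A - (k₁:ℝ)) * S15.N pq.1.1 ^ (A - (k₁:ℝ)) :=
      S15.abs_jP_rpow_le pq.1.2 hz (by linarith) hs₀pos
        (Real.sqrt_le_sqrt (isMinOn_iff.mp hz₂ z hzK))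
    have hb2 : ‖jP pq.2.1 z‖ ^ (A - (k₂:ℝ))
        ≤ s₀ ^ (A - (k₂:ℝ)) * S15.N pq.2.1 ^ (A - (k₂:ℝ)) :=
      S15.abs_jP_rpow_le pq.2.2 hz (by linarith) hs₀pos
        (Real.sqrt_le_sqrt (isMinOn_iff.mp hz₂ z hzK))
    have hy : z.im ^ (-A) ≤ z₁.im ^ (-A) :=
      Real.rpow_le_rpow_of_nonpos hy₀ (isMinOn_iff.mp hz₁ z hzK) (neg_nonpos.mpr hA0)
    refine mul_le_mul hy (mul_le_mul hb1 hb2 (Real.rpow_nonneg (norm_nonneg _) _)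
      (mul_nonneg (Real.rpow_nonneg hs₀pos.le _) (Real.rpow_nonneg (S15.N_nonneg _) _)))
      (mul_nonneg (Real.rpow_nonneg (norm_nonneg _) _)
        (Real.rpow_nonneg (norm_nonneg _) _))
      (Real.rpow_nonneg hy₀.le _)
  -- Part 3 : differentiability
  have hopen : IsOpen {z : ℂ | 0 < z.im} := isOpen_lt continuous_const Complex.continuous_im
  have hdiff : DifferentiableOn ℂ (dblPoin k₁ k₂ w m₁ m₂) {z : ℂ | 0 < z.im} := by
    have hloc : TendstoLocallyUniformlyOn
        (fun (F : Finset (CP × CP)) (z : ℂ) => ∑ pq ∈ F, dblPoinTerm k₁ k₂ w m₁ m₂ z pq)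
        (dblPoin k₁ k₂ w m₁ m₂) atTop {z : ℂ | 0 < z.im} := by
      rw [tendstoLocallyUniformlyOn_iff_forall_isCompact hopen]
      intro K hK hKc
      exact hunif K hK hKc
    refine hloc.differentiableOn ?_ hopen
    filter_upwards with F
    exact DifferentiableOn.fun_sum (fun pq _ => S15.term_diffOn k₁ k₂ w m₁ m₂ pq)
  -- Part 4 : modularity
  have hmod : ∀ γ : SL2Z, ∀ z : ℂ, 0 < z.im →
      dblPoin k₁ k₂ w m₁ m₂ (actZ γ z) = jZ γ z ^ (k₁ + k₂) * dblPoin k₁ k₂ w m₁ m₂ z := by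
    intro γ z hz
    rw [dblPoin, dblPoin]
    calc ∑' pq : CP × CP, dblPoinTerm k₁ k₂ w m₁ m₂ (actZ γ z) pq
        = ∑' pq : CP × CP, jZ γ z ^ (k₁ + k₂) * dblPoinTerm k₁ k₂ w m₁ m₂ z
            (((S15.cpEquiv γ).prodCongr (S15.cpEquiv γ)) pq) :=
          tsum_congr fun pq => S15.term_act k₁ k₂ w m₁ m₂ γ hz pq
      _ = jZ γ z ^ (k₁ + k₂) * ∑' pq : CP × CP, dblPoinTerm k₁ k₂ w m₁ m₂ z
            (((S15.cpEquiv γ).prodCongr (S15.cpEquiv γ)) pq) := tsum_mul_left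
      _ = jZ γ z ^ (k₁ + k₂) * ∑' pq : CP × CP, dblPoinTerm k₁ k₂ w m₁ m₂ z pq := by
          rw [Equiv.tsum_eq ((S15.cpEquiv γ).prodCongr (S15.cpEquiv γ))
            (dblPoinTerm k₁ k₂ w m₁ m₂ z)]
  -- Part 5 : decay at the cusp
  have hdecay : Tendsto (dblPoin k₁ k₂ w m₁ m₂) (comap Complex.im atTop) (nhds 0) := by
    set δ : ℝ := min (-2 - (A - (k₁:ℝ))) (-2 - (A - (k₂:ℝ))) / 2 with hδ
    have hmin1 : min (-2 - (A - (k₁:ℝ))) (-2 - (A - (k₂:ℝ))) ≤ -2 - (A - (k₁:ℝ)) :=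
      min_le_left _ _
    have hmin2 : min (-2 - (A - (k₁:ℝ))) (-2 - (A - (k₂:ℝ))) ≤ -2 - (A - (k₂:ℝ)) :=
      min_le_right _ _
    have hδpos : 0 < δ := by
      rw [hδ]; apply div_pos _ two_pos; apply lt_min <;> linarith
    have hee₁ : A - (k₁:ℝ) + δ < -2 := by rw [hδ]; linarith
    have hee₂ : A - (k₂:ℝ) + δ < -2 := by rw [hδ]; linarith
    -- summable strip majorant
    set g : CP × CP → ℝ := fun pq => (2/3:ℝ) ^ (A - (k₁:ℝ)) * (2/3:ℝ) ^ (A - (k₂:ℝ)) *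
        (S15.N pq.1.1 ^ (A - (k₁:ℝ) + δ) * S15.N pq.2.1 ^ (A - (k₂:ℝ) + δ)) with hg
    have hgsum : Summable g := by
      refine Summable.mul_left _ ?_
      exact Summable.mul_of_nonneg
        ((S15.summable_N_rpow hee₁).subtype _)
        ((S15.summable_N_rpow hee₂).subtype _)
        (fun p => Real.rpow_nonneg (S15.N_nonneg _) _)
        (fun p => Real.rpow_nonneg (S15.N_nonneg _) _)
    have hgnn : ∀ pq : CP × CP, 0 ≤ g pq := fun pq => by
      simp only [hg]
      exact mul_nonneg (mul_nonneg (Real.rpow_nonneg (by norm_num) _)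
        (Real.rpow_nonneg (by norm_num) _))
        (mul_nonneg (Real.rpow_nonneg (S15.N_nonneg _) _)
          (Real.rpow_nonneg (S15.N_nonneg _) _))
    set C : ℝ := ∑' pq : CP × CP, g pq with hC
    -- strip bound on individual terms
    have hstrip : ∀ z : ℂ, |z.re| ≤ 1/2 → 1 ≤ z.im → ∀ pq : CP × CP,
        ‖dblPoinTerm k₁ k₂ w m₁ m₂ z pq‖ ≤ z.im ^ (-δ) * g pq := by
      intro z hx hy pq
      have hz : 0 < z.im := lt_of_lt_of_le one_pos hy
      by_cases hc : 0 < crossP pq.1.1 pq.2.1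
      swap
      · rw [dblPoinTerm, if_neg hc, norm_zero]
        exact mul_nonneg (Real.rpow_nonneg hz.le _) (hgnn pq)
      have hrho : (4/9:ℝ) ≤ S15.rho z := by
        have hpos : (0:ℝ) < z.re * z.re + z.im * z.im + 1 := by nlinarith [sq_nonneg z.re, sq_nonneg z.im]
        rw [S15.rho, Complex.normSq_apply, le_div_iff₀ hpos]
        have hx2 : z.re ^ 2 ≤ 1/4 := by
          have := abs_le.mp hx
          nlinarith [this.1, this.2]
        nlinarith [hy]
      have hs : (2/3:ℝ) ≤ Real.sqrt (S15.rho z) := by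
        rw [show (2/3:ℝ) = Real.sqrt (4/9) by
          rw [show (4/9:ℝ) = (2/3)^2 by norm_num, Real.sqrt_sq (by norm_num)]]
        exact Real.sqrt_le_sqrt hrho
      have hp0 := S15.ne_zero_of_isCoprime pq.1.2
      have hq0 := S15.ne_zero_of_isCoprime pq.2.2
      have hj1 : jP pq.1.1 z ≠ 0 := S15.jP_ne_zero hp0 hz
      have hj2 : jP pq.2.1 z ≠ 0 := S15.jP_ne_zero hq0 hz
      have ha1 : 0 < ‖jP pq.1.1 z‖ := norm_pos_iff.mpr hj1
      have ha2 : 0 < ‖jP pq.2.1 z‖ := norm_pos_iff.mpr hj2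
      have hNn : ∀ (p : ℤ × ℤ) (e : ℝ), 0 ≤ S15.N p ^ e :=
        fun p e => Real.rpow_nonneg (S15.N_nonneg p) e
      have h23n : ∀ e : ℝ, (0:ℝ) ≤ (2/3:ℝ) ^ e :=
        fun e => Real.rpow_nonneg (by norm_num) e
      have habsn : ∀ (x : ℂ) (e : ℝ), 0 ≤ ‖x‖ ^ e :=
        fun x e => Real.rpow_nonneg (norm_nonneg x) e
      have hbase1 : (2/3:ℝ) * S15.N pq.1.1 ≤ ‖jP pq.1.1 z‖ :=
        le_trans (mul_le_mul_of_nonneg_right hs (S15.N_nonneg _)) (S15.sqrt_rho_N_le hp0 hz)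
      have hbase2 : (2/3:ℝ) * S15.N pq.2.1 ≤ ‖jP pq.2.1 z‖ :=
        le_trans (mul_le_mul_of_nonneg_right hs (S15.N_nonneg _)) (S15.sqrt_rho_N_le hq0 hz)
      -- at least one of the `c` entries is nonzero
      have hcc : pq.1.1.1 ≠ 0 ∨ pq.2.1.1 ≠ 0 := by
        by_contra hcc
        push_neg at hcc
        rw [crossP, hcc.1, hcc.2] at hc
        simp at hc
      -- the slot with nonzero `c` dominates `z.im`
      have hyle : z.im ≤ ‖jP pq.1.1 z‖ ∨ z.im ≤ ‖jP pq.2.1 z‖ := by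
        have key : ∀ p : ℤ × ℤ, p.1 ≠ 0 → z.im ≤ ‖jP p z‖ := by
          intro p hp1
          have h1 : (1:ℝ) ≤ |(p.1:ℝ)| := by
            have : (1:ℤ) ≤ |p.1| := Int.one_le_abs hp1
            calc (1:ℝ) ≤ ((|p.1| : ℤ) : ℝ) := by exact_mod_cast this
              _ = |(p.1:ℝ)| := by push_cast; ring
          have him : |(jP p z).im| = |(p.1:ℝ)| * z.im := by
            have : (jP p z).im = (p.1:ℝ) * z.im := by simp [jP]
            rw [this, abs_mul, abs_of_pos hz]
          calc z.im = 1 * z.im := (one_mul _).symm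
            _ ≤ |(p.1:ℝ)| * z.im := mul_le_mul_of_nonneg_right h1 hz.le
            _ = |(jP p z).im| := him.symm
            _ ≤ ‖jP p z‖ := Complex.abs_im_le_norm _
        rcases hcc with h | h
        · exact Or.inl (key _ h)
        · exact Or.inr (key _ h)
      -- master bound and y^{-A} ≤ 1
      refine le_trans (S15.term_bound k₁ k₂ w m₁ m₂ hz pq) ?_
      have hyA : z.im ^ (-A) ≤ 1 :=
        Real.rpow_le_one_of_one_le_of_nonpos hy (neg_nonpos.mpr hA0)
      have h23 : ∀ e e' : ℝ, e ≤ e' → (2/3:ℝ) ^ e' ≤ (2/3:ℝ) ^ e :=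
        fun e e' h => Real.rpow_le_rpow_of_exponent_ge (by norm_num) (by norm_num) h
      -- two symmetric cases
      have core : ‖jP pq.1.1 z‖ ^ (A - (k₁:ℝ)) *
          ‖jP pq.2.1 z‖ ^ (A - (k₂:ℝ)) ≤ z.im ^ (-δ) * g pq := by
        rcases hyle with hyle | hyle
        · -- split the first factor
          have split1 : ‖jP pq.1.1 z‖ ^ (A - (k₁:ℝ))
              = ‖jP pq.1.1 z‖ ^ (A - (k₁:ℝ) + δ) *
                ‖jP pq.1.1 z‖ ^ (-δ) := by
            rw [← Real.rpow_add ha1]; ring_nf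
          have t1 : ‖jP pq.1.1 z‖ ^ (A - (k₁:ℝ) + δ)
              ≤ (2/3:ℝ) ^ (A - (k₁:ℝ)) * S15.N pq.1.1 ^ (A - (k₁:ℝ) + δ) := by
            calc ‖jP pq.1.1 z‖ ^ (A - (k₁:ℝ) + δ)
                ≤ ((2/3:ℝ) * S15.N pq.1.1) ^ (A - (k₁:ℝ) + δ) :=
                  Real.rpow_le_rpow_of_nonpos
                    (mul_pos (by norm_num) (S15.N_pos hp0)) hbase1 (by linarith)
              _ = (2/3:ℝ) ^ (A - (k₁:ℝ) + δ) * S15.N pq.1.1 ^ (A - (k₁:ℝ) + δ) :=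
                  Real.mul_rpow (by norm_num) (S15.N_nonneg _)
              _ ≤ (2/3:ℝ) ^ (A - (k₁:ℝ)) * S15.N pq.1.1 ^ (A - (k₁:ℝ) + δ) :=
                  mul_le_mul_of_nonneg_right (h23 _ _ (by linarith)) (hNn _ _)
          have t2 : ‖jP pq.1.1 z‖ ^ (-δ) ≤ z.im ^ (-δ) :=
            Real.rpow_le_rpow_of_nonpos hz hyle (neg_nonpos.mpr hδpos.le)
          have t3 : ‖jP pq.2.1 z‖ ^ (A - (k₂:ℝ))
              ≤ (2/3:ℝ) ^ (A - (k₂:ℝ)) * S15.N pq.2.1 ^ (A - (k₂:ℝ) + δ) := by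
            calc ‖jP pq.2.1 z‖ ^ (A - (k₂:ℝ))
                ≤ (2/3:ℝ) ^ (A - (k₂:ℝ)) * S15.N pq.2.1 ^ (A - (k₂:ℝ)) :=
                  S15.abs_jP_rpow_le pq.2.2 hz (by linarith) (by norm_num) hs
              _ ≤ (2/3:ℝ) ^ (A - (k₂:ℝ)) * S15.N pq.2.1 ^ (A - (k₂:ℝ) + δ) :=
                  mul_le_mul_of_nonneg_left
                    (Real.rpow_le_rpow_of_exponent_le (S15.one_le_N hq0) (by linarith))
                    (h23n _)
          rw [split1]
          calc ‖jP pq.1.1 z‖ ^ (A - (k₁:ℝ) + δ) *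
                ‖jP pq.1.1 z‖ ^ (-δ) * ‖jP pq.2.1 z‖ ^ (A - (k₂:ℝ))
              ≤ ((2/3:ℝ) ^ (A - (k₁:ℝ)) * S15.N pq.1.1 ^ (A - (k₁:ℝ) + δ)) * z.im ^ (-δ) *
                ((2/3:ℝ) ^ (A - (k₂:ℝ)) * S15.N pq.2.1 ^ (A - (k₂:ℝ) + δ)) := by
                refine mul_le_mul (mul_le_mul t1 t2 (habsn _ _)
                    (mul_nonneg (h23n _) (hNn _ _))) t3
                  (habsn _ _)
                  (mul_nonneg (mul_nonneg (h23n _) (hNn _ _)) (Real.rpow_nonneg hz.le _))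
            _ = z.im ^ (-δ) * g pq := by simp only [hg]; ring
        · -- split the second factor
          have split2 : ‖jP pq.2.1 z‖ ^ (A - (k₂:ℝ))
              = ‖jP pq.2.1 z‖ ^ (A - (k₂:ℝ) + δ) *
                ‖jP pq.2.1 z‖ ^ (-δ) := by
            rw [← Real.rpow_add ha2]; ring_nf
          have t1 : ‖jP pq.2.1 z‖ ^ (A - (k₂:ℝ) + δ)
              ≤ (2/3:ℝ) ^ (A - (k₂:ℝ)) * S15.N pq.2.1 ^ (A - (k₂:ℝ) + δ) := by
            calc ‖jP pq.2.1 z‖ ^ (A - (k₂:ℝ) + δ)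
                ≤ ((2/3:ℝ) * S15.N pq.2.1) ^ (A - (k₂:ℝ) + δ) :=
                  Real.rpow_le_rpow_of_nonpos
                    (mul_pos (by norm_num) (S15.N_pos hq0)) hbase2 (by linarith)
              _ = (2/3:ℝ) ^ (A - (k₂:ℝ) + δ) * S15.N pq.2.1 ^ (A - (k₂:ℝ) + δ) :=
                  Real.mul_rpow (by norm_num) (S15.N_nonneg _)
              _ ≤ (2/3:ℝ) ^ (A - (k₂:ℝ)) * S15.N pq.2.1 ^ (A - (k₂:ℝ) + δ) :=
                  mul_le_mul_of_nonneg_right (h23 _ _ (by linarith)) (hNn _ _)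
          have t2 : ‖jP pq.2.1 z‖ ^ (-δ) ≤ z.im ^ (-δ) :=
            Real.rpow_le_rpow_of_nonpos hz hyle (neg_nonpos.mpr hδpos.le)
          have t3 : ‖jP pq.1.1 z‖ ^ (A - (k₁:ℝ))
              ≤ (2/3:ℝ) ^ (A - (k₁:ℝ)) * S15.N pq.1.1 ^ (A - (k₁:ℝ) + δ) := by
            calc ‖jP pq.1.1 z‖ ^ (A - (k₁:ℝ))
                ≤ (2/3:ℝ) ^ (A - (k₁:ℝ)) * S15.N pq.1.1 ^ (A - (k₁:ℝ)) :=
                  S15.abs_jP_rpow_le pq.1.2 hz (by linarith) (by norm_num) hs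
              _ ≤ (2/3:ℝ) ^ (A - (k₁:ℝ)) * S15.N pq.1.1 ^ (A - (k₁:ℝ) + δ) :=
                  mul_le_mul_of_nonneg_left
                    (Real.rpow_le_rpow_of_exponent_le (S15.one_le_N hp0) (by linarith))
                    (h23n _)
          rw [split2]
          calc ‖jP pq.1.1 z‖ ^ (A - (k₁:ℝ)) *
                (‖jP pq.2.1 z‖ ^ (A - (k₂:ℝ) + δ) *
                  ‖jP pq.2.1 z‖ ^ (-δ))
              ≤ ((2/3:ℝ) ^ (A - (k₁:ℝ)) * S15.N pq.1.1 ^ (A - (k₁:ℝ) + δ)) *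
                ((2/3:ℝ) ^ (A - (k₂:ℝ)) * S15.N pq.2.1 ^ (A - (k₂:ℝ) + δ) * z.im ^ (-δ)) := by
                refine mul_le_mul t3 (mul_le_mul t1 t2 (habsn _ _)
                    (mul_nonneg (h23n _) (hNn _ _)))
                  (mul_nonneg (habsn _ _) (habsn _ _))
                  (mul_nonneg (h23n _) (hNn _ _))
            _ = z.im ^ (-δ) * g pq := by simp only [hg]; ring
      calc z.im ^ (-A) * (‖jP pq.1.1 z‖ ^ (A - (k₁:ℝ)) *
            ‖jP pq.2.1 z‖ ^ (A - (k₂:ℝ)))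
          ≤ 1 * (z.im ^ (-δ) * g pq) := by
            refine mul_le_mul hyA core
              (mul_nonneg (habsn _ _) (habsn _ _)) (by norm_num)
        _ = z.im ^ (-δ) * g pq := one_mul _
    have hC0 : 0 ≤ C := tsum_nonneg hgnn
    have hbound : ∀ z : ℂ, 1 ≤ z.im → ‖dblPoin k₁ k₂ w m₁ m₂ z‖ ≤ C * z.im ^ (-δ) := by
      intro z hy
      have hz : 0 < z.im := lt_of_lt_of_le one_pos hy
      set n : ℤ := -(round z.re) with hn
      have hdet : Matrix.det !![(1:ℤ), n; 0, 1] = 1 := by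
        simp [Matrix.det_fin_two_of]
      set Tn : SL2Z := ⟨!![(1:ℤ), n; 0, 1], hdet⟩ with hTn
      have e10 : Tn 1 0 = 0 := rfl
      have e11 : Tn 1 1 = 1 := rfl
      have e00 : Tn 0 0 = 1 := rfl
      have e01 : Tn 0 1 = n := rfl
      have hjTn : jZ Tn z = 1 := by rw [jZ, e10, e11]; simp
      have hact : actZ Tn z = z + (n:ℂ) := by
        rw [actZ, hjTn, e00, e01]; simp
      have hper := hmod Tn z hz
      rw [hact, hjTn, one_zpow, one_mul] at hper
      set z' : ℂ := z + (n:ℂ) with hz'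
      have hz'im : z'.im = z.im := by simp [hz']
      have hz're : |z'.re| ≤ 1/2 := by
        have : z'.re = z.re - round z.re := by
          simp [hz', hn]; ring
        rw [this]; exact abs_sub_round z.re
      have hy' : 1 ≤ z'.im := by rw [hz'im]; exact hy
      have hz'pos : 0 < z'.im := by rw [hz'im]; exact hz
      rw [← hper]
      calc ‖dblPoin k₁ k₂ w m₁ m₂ z'‖
          ≤ ∑' pq : CP × CP, ‖dblPoinTerm k₁ k₂ w m₁ m₂ z' pq‖ :=
            norm_tsum_le_tsum_norm (hsum z' hz'pos)
        _ ≤ ∑' pq : CP × CP, z'.im ^ (-δ) * g pq :=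
            Summable.tsum_le_tsum (fun pq => hstrip z' hz're hy' pq) (hsum z' hz'pos)
              (hgsum.mul_left _)
        _ = z'.im ^ (-δ) * C := tsum_mul_left
        _ = C * z.im ^ (-δ) := by rw [hz'im, mul_comm]
    have hev : ∀ᶠ z : ℂ in comap Complex.im atTop,
        ‖dblPoin k₁ k₂ w m₁ m₂ z‖ ≤ C * z.im ^ (-δ) := by
      have h1 : ∀ᶠ z : ℂ in comap Complex.im atTop, 1 ≤ z.im :=
        tendsto_comap.eventually (eventually_ge_atTop 1)
      exact h1.mono fun z hz => hbound z hz
    have hlim : Tendsto (fun z : ℂ => C * z.im ^ (-δ)) (comap Complex.im atTop) (nhds 0) := by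
      have h2 : Tendsto (fun y : ℝ => C * y ^ (-δ)) atTop (nhds 0) := by
        have := (tendsto_rpow_neg_atTop hδpos).const_mul C
        rwa [mul_zero] at this
      exact h2.comp tendsto_comap
    exact squeeze_zero_norm' hev hlim
  exact ⟨hsum, hunif, hdiff, hmod, hdecay⟩
end
end
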